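/- arXiv:1805.10911 — 3 statements merged into one kernel-verified Lean document; each statement's English description precedes it below -/
import Mathlib

section
/- Let G be a bipartite graph with parts A, B of size n with e(G) ≥ d·n². Then there exist A₁ ⊆ A and B₁ ⊆ B with |A₁| = |B₁| ≥ d^{60}·n/3 such that the induced bipartite graph G₁ = G[A₁,B₁] has minimum degree at least 10^{-3}·d·|A₁|, and for every S ⊆ A₁ and every S ⊆ B₁ we have |N_{G₁}(S)| ≥ min{2|S|, 2|A₁|/3}. -/
set_option linter.unusedSectionVars false
set_option maxRecDepth 8000
set_option maxHeartbeats 1000000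

namespace RMP

variable {α β : Type} [DecidableEq α] [DecidableEq β]

def flipE (E : α → β → Bool) : β → α → Bool := fun b a => E a b

def degA (E : α → β → Bool) (a : α) (V : Finset β) : ℕ := (V.filter fun b => E a b).card

def eCard (E : α → β → Bool) (U : Finset α) (V : Finset β) : ℕ :=
  ((U ×ˢ V).filter fun p => E p.1 p.2).card

def nbhd (E : α → β → Bool) (S : Finset α) (V : Finset β) : Finset β :=
  V.filter fun b => ∃ a ∈ S, E a b

lemma flipE_flipE (E : α → β → Bool) : flipE (flipE E) = E := rfl

lemma eCard_flip (E : α → β → Bool) (U : Finset α) (V : Finset β) :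
    eCard (flipE E) V U = eCard E U V := by
  unfold eCard
  apply Finset.card_bij (fun p _ => p.swap)
  · intro p hp
    simp only [Finset.mem_filter, Finset.mem_product] at hp ⊢
    exact ⟨⟨hp.1.2, hp.1.1⟩, hp.2⟩
  · intro p hp q hq h
    exact Prod.swap_injective h
  · intro p hp
    refine ⟨p.swap, ?_, by simp⟩
    simp only [Finset.mem_filter, Finset.mem_product] at hp ⊢
    exact ⟨⟨hp.1.2, hp.1.1⟩, hp.2⟩

lemma eCard_singleton (E : α → β → Bool) (a : α) (V : Finset β) :
    eCard E {a} V = degA E a V := by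
  unfold eCard
  rw [Finset.singleton_product, Finset.filter_map, Finset.card_map]
  rfl

lemma eCard_eq_sum_degA (E : α → β → Bool) (U : Finset α) (V : Finset β) :
    eCard E U V = ∑ a ∈ U, degA E a V := by
  classical
  induction U using Finset.induction_on with
  | empty => simp [eCard]
  | @insert x s hx ih =>
    rw [Finset.sum_insert hx, ← ih, ← eCard_singleton E x V, eCard, eCard,
      Finset.insert_eq, Finset.union_product, Finset.filter_union,
      Finset.card_union_of_disjoint]
    · rfl
    · rw [Finset.disjoint_left]
      rintro ⟨p1, p2⟩ hp hq
      simp only [Finset.mem_filter, Finset.mem_product, Finset.mem_singleton] at hp hq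
      exact hx (hp.1.1 ▸ hq.1.1)

lemma eCard_eq_sum_degB (E : α → β → Bool) (U : Finset α) (V : Finset β) :
    eCard E U V = ∑ b ∈ V, degA (flipE E) b U := by
  rw [← eCard_flip, eCard_eq_sum_degA]

lemma eCard_mono (E : α → β → Bool) {U U' : Finset α} {V V' : Finset β}
    (hU : U' ⊆ U) (hV : V' ⊆ V) : eCard E U' V' ≤ eCard E U V :=
  Finset.card_le_card (Finset.filter_subset_filter _ (Finset.product_subset_product hU hV))

lemma eCard_le_mul (E : α → β → Bool) (U : Finset α) (V : Finset β) :
    eCard E U V ≤ U.card * V.card := by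
  calc eCard E U V ≤ (U ×ˢ V).card := Finset.card_filter_le _ _
  _ = U.card * V.card := Finset.card_product U V

lemma degA_le_eCard (E : α → β → Bool) {a : α} {U : Finset α} (V : Finset β) (ha : a ∈ U) :
    degA E a V ≤ eCard E U V := by
  rw [eCard_eq_sum_degA]
  exact Finset.single_le_sum (f := fun a => degA E a V) (fun _ _ => Nat.zero_le _) ha

lemma eCard_erase_left (E : α → β → Bool) (U : Finset α) (V : Finset β) (a : α) :
    eCard E U V ≤ eCard E (U.erase a) V + degA E a V := by
  by_cases ha : a ∈ U
  · rw [eCard_eq_sum_degA, eCard_eq_sum_degA, ← Finset.sum_erase_add U _ ha]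
  · rw [Finset.erase_eq_of_notMem ha]; exact Nat.le_add_right _ _

lemma degA_mono (E : α → β → Bool) (a : α) {V V' : Finset β} (h : V' ⊆ V) :
    degA E a V' ≤ degA E a V :=
  Finset.card_le_card (Finset.filter_subset_filter _ h)

lemma eCard_erase_both (E : α → β → Bool) (U : Finset α) (V : Finset β) (a : α) (b : β) :
    eCard E U V ≤ eCard E (U.erase a) (V.erase b) + degA E a V + degA (flipE E) b U := by
  have h1 := eCard_erase_left E U V a
  have h2 : eCard E (U.erase a) V ≤ eCard E (U.erase a) (V.erase b) + degA (flipE E) b (U.erase a) := by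
    rw [← eCard_flip E (U.erase a) V, ← eCard_flip E (U.erase a) (V.erase b)]
    exact eCard_erase_left (flipE E) V (U.erase a) b
  have h3 : degA (flipE E) b (U.erase a) ≤ degA (flipE E) b U :=
    degA_mono _ _ (Finset.erase_subset _ _)
  omega

lemma exists_min_degB (E : α → β → Bool) (U : Finset α) {V : Finset β} (hV : V.Nonempty) :
    ∃ b ∈ V, V.card * degA (flipE E) b U ≤ eCard E U V := by
  obtain ⟨b, hb, hmin⟩ := V.exists_min_image (fun b => degA (flipE E) b U) hV
  refine ⟨b, hb, ?_⟩
  rw [eCard_eq_sum_degB]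
  calc V.card * degA (flipE E) b U = ∑ _x ∈ V, degA (flipE E) b U := by
        rw [Finset.sum_const, smul_eq_mul]
  _ ≤ ∑ x ∈ V, degA (flipE E) x U := Finset.sum_le_sum fun x hx => hmin x hx

lemma nbhd_subset (E : α → β → Bool) (S : Finset α) (V : Finset β) : nbhd E S V ⊆ V :=
  Finset.filter_subset _ _

lemma nbhd_mono (E : α → β → Bool) {S S' : Finset α} (V : Finset β) (h : S' ⊆ S) :
    nbhd E S' V ⊆ nbhd E S V := by
  intro b hb
  simp only [nbhd, Finset.mem_filter] at hb ⊢
  obtain ⟨hbV, a, ha, hE⟩ := hb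
  exact ⟨hbV, a, h ha, hE⟩

lemma eCard_nbhd (E : α → β → Bool) (S : Finset α) (V : Finset β) :
    eCard E S V = eCard E S (nbhd E S V) := by
  unfold eCard nbhd
  congr 1
  ext p
  simp only [Finset.mem_filter, Finset.mem_product]
  constructor
  · rintro ⟨⟨h1, h2⟩, h3⟩
    exact ⟨⟨h1, ⟨h2, p.1, h1, h3⟩⟩, h3⟩
  · rintro ⟨⟨h1, h2, _⟩, h3⟩
    exact ⟨⟨h1, h2⟩, h3⟩



lemma trim_right (E : α → β → Bool) (U : Finset α) :
    ∀ (V : Finset β) (s : ℕ), s ≤ V.card →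
      ∃ V' ⊆ V, V'.card = s ∧ eCard E U V * s ≤ eCard E U V' * V.card := by
  intro V
  induction V using Finset.strongInduction with
  | _ V ih =>
    intro s hs
    rcases eq_or_lt_of_le hs with heq | hlt
    · exact ⟨V, Finset.Subset.refl V, heq.symm, by rw [heq]⟩
    · have hV : V.Nonempty := Finset.card_pos.mp (Nat.pos_of_ne_zero (by omega))
      obtain ⟨b, hb, hminb⟩ := exists_min_degB E U hV
      set V₂ := V.erase b with hV₂
      have hV₂card : V₂.card = V.card - 1 := Finset.card_erase_of_mem hb
      have hsV₂ : s ≤ V₂.card := by omega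
      obtain ⟨V', hV'sub, hV'card, hineq⟩ := ih V₂ (Finset.erase_ssubset hb) s hsV₂
      refine ⟨V', hV'sub.trans (Finset.erase_subset _ _), hV'card, ?_⟩
      -- key : eCard E U V * V₂.card ≤ eCard E U V₂ * V.card
      have hsplit : eCard E U V = eCard E U V₂ + degA (flipE E) b U := by
        rw [eCard_eq_sum_degB, eCard_eq_sum_degB, hV₂]
        rw [Finset.sum_erase_add V _ hb]
      have hkey : eCard E U V * V₂.card ≤ eCard E U V₂ * V.card := by
        have h1 : V.card * degA (flipE E) b U ≤ eCard E U V := hminb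
        have h2 : V.card = V₂.card + 1 := by omega
        nlinarith [hsplit, h1, h2]
      rcases Nat.eq_zero_or_pos V₂.card with h0 | hpos
      · have : s = 0 := by omega
        simp [this]
      · have c1 : eCard E U V * s * V₂.card ≤ eCard E U V' * V.card * V₂.card := by
          calc eCard E U V * s * V₂.card = (eCard E U V * V₂.card) * s := by ring
          _ ≤ (eCard E U V₂ * V.card) * s := Nat.mul_le_mul_right s hkey
          _ = (eCard E U V₂ * s) * V.card := by ring
          _ ≤ (eCard E U V' * V₂.card) * V.card := Nat.mul_le_mul_right _ hineq
          _ = eCard E U V' * V.card * V₂.card := by ring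
        exact Nat.le_of_mul_le_mul_right c1 hpos

lemma trim_left (E : α → β → Bool) (V : Finset β) (U : Finset α) (s : ℕ) (hs : s ≤ U.card) :
    ∃ U' ⊆ U, U'.card = s ∧ eCard E U V * s ≤ eCard E U' V * U.card := by
  obtain ⟨U', h1, h2, h3⟩ := trim_right (flipE E) V U s hs
  refine ⟨U', h1, h2, ?_⟩
  rwa [eCard_flip, eCard_flip] at h3


lemma bern1 {k : ℝ} (hk : 1 ≤ k) : (k + 59) * k ^ 58 ≤ (k + 1) ^ 59 := by
  have hk0 : (0:ℝ) < k := by linarith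
  have hinv : (0:ℝ) ≤ 1/k := by positivity
  have h := one_add_mul_le_pow (a := 1/k) (by linarith : (-2:ℝ) ≤ 1/k) 59
  have h2 : (1 + 59 * (1/k)) * k ^ 59 ≤ (1 + 1/k) ^ 59 * k ^ 59 := by
    apply mul_le_mul_of_nonneg_right _ (by positivity)
    exact_mod_cast h
  calc (k + 59) * k ^ 58 = (1 + 59 * (1/k)) * k ^ 59 := by field_simp
  _ ≤ (1 + 1/k) ^ 59 * k ^ 59 := h2
  _ = ((1 + 1/k) * k) ^ 59 := by rw [← mul_pow]
  _ = (k + 1) ^ 59 := by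
        congr 1
        field_simp

lemma bern2 {k : ℝ} (hk : 1 ≤ k) : 10 ^ 30 * k ^ 29 * (k - 57) ≤ (10 * k - 19) ^ 30 := by
  have hk0 : (0:ℝ) < k := by linarith
  have ha : (-2:ℝ) ≤ -19 / (10 * k) := by
    have h19 : (19:ℝ) / (10 * k) ≤ 2 := by
      rw [div_le_iff₀ (by positivity)]
      linarith
    have hneg : (-19:ℝ) / (10 * k) = -(19 / (10 * k)) := by ring
    rw [hneg]
    linarith
  have h := one_add_mul_le_pow ha 30
  have h2 : (1 + 30 * (-19 / (10 * k))) * (10 * k) ^ 30 ≤ (1 + -19 / (10 * k)) ^ 30 * (10 * k) ^ 30 := by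
    apply mul_le_mul_of_nonneg_right _ (by positivity)
    exact_mod_cast h
  calc 10 ^ 30 * k ^ 29 * (k - 57) = (1 + 30 * (-19 / (10 * k))) * (10 * k) ^ 30 := by
        field_simp; ring
  _ ≤ (1 + -19 / (10 * k)) ^ 30 * (10 * k) ^ 30 := h2
  _ = ((1 + -19 / (10 * k)) * (10 * k)) ^ 30 := by rw [← mul_pow]
  _ = (10 * k - 19) ^ 30 := by
        congr 1
        field_simp
        ring

lemma polykey {k : ℝ} (hk : 1682 ≤ k) : (k - 1) ^ 59 * k ^ 30 ≤ k ^ 88 * (k - 57) := by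
  have hk0 : (0:ℝ) < k := by linarith
  have hA : (k - 1) ^ 59 * (k + 1) ^ 59 ≤ k ^ 118 := by
    have : (k - 1) * (k + 1) ≤ k ^ 2 := by nlinarith
    calc (k - 1) ^ 59 * (k + 1) ^ 59 = ((k - 1) * (k + 1)) ^ 59 := by rw [mul_pow]
    _ ≤ (k ^ 2) ^ 59 := pow_le_pow_left₀ (by nlinarith) this 59
    _ = k ^ 118 := by rw [← pow_mul]
  have hB : (k + 59) * k ^ 58 ≤ (k + 1) ^ 59 := bern1 (by linarith)
  have hstep : (k - 1) ^ 59 * k ^ 30 * ((k + 59) * k ^ 58) ≤ k ^ 148 := by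
    calc (k - 1) ^ 59 * k ^ 30 * ((k + 59) * k ^ 58)
        ≤ (k - 1) ^ 59 * k ^ 30 * (k + 1) ^ 59 := by
          apply mul_le_mul_of_nonneg_left hB
          exact mul_nonneg (pow_nonneg (by linarith) 59) (by positivity)
    _ = ((k - 1) ^ 59 * (k + 1) ^ 59) * k ^ 30 := by ring
    _ ≤ k ^ 118 * k ^ 30 := by
          apply mul_le_mul_of_nonneg_right hA (by positivity)
    _ = k ^ 148 := by rw [← pow_add]
  -- divide by k^58 : (k-1)^59 k^30 (k+59) ≤ k^90
  have hdiv : (k - 1) ^ 59 * k ^ 30 * (k + 59) ≤ k ^ 90 := by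
    have h58 : (0:ℝ) < k ^ 58 := by positivity
    rw [← mul_le_mul_iff_of_pos_right h58]
    calc (k - 1) ^ 59 * k ^ 30 * (k + 59) * k ^ 58
        = (k - 1) ^ 59 * k ^ 30 * ((k + 59) * k ^ 58) := by ring
    _ ≤ k ^ 148 := hstep
    _ = k ^ 90 * k ^ 58 := by rw [← pow_add]
  have hC : k ^ 90 ≤ k ^ 88 * ((k - 57) * (k + 59)) := by
    have : k ^ 2 ≤ (k - 57) * (k + 59) := by nlinarith
    calc k ^ 90 = k ^ 88 * k ^ 2 := by rw [← pow_add]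
    _ ≤ k ^ 88 * ((k - 57) * (k + 59)) := by
          apply mul_le_mul_of_nonneg_left this (by positivity)
  have h59 : (0:ℝ) < k + 59 := by linarith
  rw [← mul_le_mul_iff_of_pos_right h59]
  calc (k - 1) ^ 59 * k ^ 30 * (k + 59) ≤ k ^ 90 := hdiv
  _ ≤ k ^ 88 * ((k - 57) * (k + 59)) := hC
  _ = k ^ 88 * (k - 57) * (k + 59) := by ring

lemma mindeg_key {e e' k : ℝ} (he : 0 ≤ e) (he' : 0 ≤ e') (hk : 1682 ≤ k)
    (h : e' ^ 30 * k ^ 59 ≤ e ^ 30 * (k - 1) ^ 59) :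
    10 * e' * k ≤ e * (10 * k - 19) := by
  have hk0 : (0:ℝ) < k := by linarith
  have hpow : (10 * e' * k) ^ 30 * k ^ 59 ≤ (e * (10 * k - 19)) ^ 30 * k ^ 59 := by
    have expand : (10 * e' * k) ^ 30 * k ^ 59 = (e' ^ 30 * k ^ 59) * (10 ^ 30 * k ^ 30) := by ring
    rw [expand]
    calc (e' ^ 30 * k ^ 59) * (10 ^ 30 * k ^ 30)
        ≤ (e ^ 30 * (k - 1) ^ 59) * (10 ^ 30 * k ^ 30) := by
          apply mul_le_mul_of_nonneg_right h (by positivity)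
    _ = e ^ 30 * 10 ^ 30 * ((k - 1) ^ 59 * k ^ 30) := by ring
    _ ≤ e ^ 30 * 10 ^ 30 * (k ^ 88 * (k - 57)) := by
          apply mul_le_mul_of_nonneg_left (polykey hk) (by positivity)
    _ = e ^ 30 * (10 ^ 30 * k ^ 29 * (k - 57)) * k ^ 59 := by ring
    _ ≤ e ^ 30 * (10 * k - 19) ^ 30 * k ^ 59 := by
          apply mul_le_mul_of_nonneg_right _ (by positivity)
          apply mul_le_mul_of_nonneg_left (bern2 (by linarith)) (by positivity)
    _ = (e * (10 * k - 19)) ^ 30 * k ^ 59 := by ring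
  have hpow2 : (10 * e' * k) ^ 30 ≤ (e * (10 * k - 19)) ^ 30 :=
    le_of_mul_le_mul_right hpow (by positivity)
  have h1 : (0:ℝ) ≤ 10 * e' * k := by positivity
  have h2 : (0:ℝ) ≤ e * (10 * k - 19) := by
    apply mul_nonneg he; linarith
  exact (pow_le_pow_iff_left₀ h1 h2 (by norm_num)).mp hpow2


lemma telescope_key {D N k n' e : ℝ} (hN : 0 < N) (hk : 2000 ≤ k)
    (hn : 1 ≤ n') (h3 : 3 * n' ≤ k + 2) (he : 0 ≤ e) (hDN : 0 ≤ D ^ 30 * N)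
    (KB : D ^ 30 * N * k ^ 59 ≤ e ^ 30) :
    D ^ 30 * N * (20 * k * n') ^ 30 ≤ (9 * e) ^ 30 * n' := by
  have hk0 : (0:ℝ) < k := by linarith
  have hn0 : (0:ℝ) < n' := by linarith
  have h1 : 3 * n' ≤ (1001/1000) * k := by nlinarith
  have h2 : (3 * n') ^ 29 ≤ ((1001/1000) * k) ^ 29 :=
    pow_le_pow_left₀ (by positivity) h1 29
  have h2' : (1000:ℝ)^29 * 3^29 * n'^29 ≤ 1001^29 * k^29 := by
    rw [mul_pow, mul_pow, div_pow, div_mul_eq_mul_div] at h2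
    rw [le_div_iff₀ (by positivity)] at h2
    nlinarith [h2]
  have hnum : (20:ℝ)^30 * 1001^29 ≤ 9^30 * 3^29 * 1000^29 := by norm_num
  have hmain : (20:ℝ)^30 * n'^29 ≤ 9^30 * k^29 := by
    have c1 : (1000:ℝ)^29 * 3^29 * ((20:ℝ)^30 * n'^29) ≤ (20:ℝ)^30 * (1001^29 * k^29) := by
      nlinarith [h2']
    have c2 : (20:ℝ)^30 * (1001^29 * k^29) ≤ (1000:ℝ)^29 * 3^29 * (9^30 * k^29) := by
      have := mul_le_mul_of_nonneg_right hnum (le_of_lt (by positivity : (0:ℝ) < k^29))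
      nlinarith [this]
    have c3 := le_trans c1 c2
    have hpos : (0:ℝ) < (1000:ℝ)^29 * 3^29 := by positivity
    exact le_of_mul_le_mul_left c3 hpos
  calc D ^ 30 * N * (20 * k * n') ^ 30
      = (D ^ 30 * N * n') * (20^30 * n'^29 * k^30) := by ring
  _ ≤ (D ^ 30 * N * n') * (9^30 * k^29 * k^30) := by
      apply mul_le_mul_of_nonneg_left _ (by positivity)
      apply mul_le_mul_of_nonneg_right hmain (by positivity)
  _ = 9^30 * (D ^ 30 * N * k ^ 59) * n' := by ring
  _ ≤ 9^30 * e ^ 30 * n' := by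
      apply mul_le_mul_of_nonneg_right _ (le_of_lt hn0)
      apply mul_le_mul_of_nonneg_left KB (by positivity)
  _ = (9 * e) ^ 30 * n' := by ring

def Good (E : α → β → Bool) (X : Finset α) (Y : Finset β) : Prop :=
  X.card = Y.card ∧
  (∀ a ∈ X, 9 * eCard E X Y ≤ 10 * X.card * degA E a Y) ∧
  (∀ b ∈ Y, 9 * eCard E X Y ≤ 10 * X.card * degA (flipE E) b X) ∧
  (∀ S ⊆ X, 3 * S.card ≤ X.card + 2 →
    min (2 * (S.card : ℝ)) (2 * (X.card : ℝ) / 3) ≤ ((nbhd E S Y).card : ℝ)) ∧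
  (∀ T ⊆ Y, 3 * T.card ≤ X.card + 2 →
    min (2 * (T.card : ℝ)) (2 * (X.card : ℝ) / 3) ≤ ((nbhd (flipE E) T X).card : ℝ))

lemma Good.symm {E : α → β → Bool} {X : Finset α} {Y : Finset β} (h : Good E X Y) :
    Good (flipE E) Y X := by
  obtain ⟨h0, h1, h2, h3, h4⟩ := h
  have he : eCard (flipE E) Y X = eCard E X Y := eCard_flip E X Y
  refine ⟨h0.symm, ?_, ?_, ?_, ?_⟩
  · intro b hb; rw [he, ← h0]; exact h2 b hb
  · intro a ha; rw [he, ← h0, flipE_flipE]; exact h1 a ha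
  · intro T hT h3T; rw [← h0] at h3T ⊢; exact h4 T hT h3T
  · intro S hS h3S; rw [flipE_flipE, ← h0] at *; exact h3 S hS h3S

def P (N : ℕ) : Prop :=
  ∀ (α β : Type) [DecidableEq α] [DecidableEq β] (E : α → β → Bool)
    (X₀ : Finset α) (Y₀ : Finset β) (D : ℝ),
    X₀.card = N → Y₀.card = N → 0 < D → (2000 : ℝ) ≤ D ^ 30 * N →
    D * (N : ℝ) ^ 2 ≤ (eCard E X₀ Y₀ : ℝ) →
    ∃ X Y, X ⊆ X₀ ∧ Y ⊆ Y₀ ∧ X.Nonempty ∧ Good E X Y ∧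
      D ^ 30 * N * (X.card : ℝ) ^ 59 ≤ (eCard E X Y : ℝ) ^ 30


lemma extract {α β : Type} [DecidableEq α] [DecidableEq β] {N : ℕ}
    (IH : ∀ M, M < N → P M)
    (E : α → β → Bool) (X₀ : Finset α) (Y₀ : Finset β) (D : ℝ)
    (hX₀ : X₀.card = N) (hD : 0 < D) (hDN : (2000:ℝ) ≤ D ^ 30 * N)
    (X : Finset α) (Y : Finset β) (hXX₀ : X ⊆ X₀) (hYY₀ : Y ⊆ Y₀)
    (hk2000 : 2000 ≤ X.card)
    (KB : D ^ 30 * N * (X.card : ℝ) ^ 59 ≤ (eCard E X Y : ℝ) ^ 30)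
    (S : Finset α) (hSX : S ⊆ X)
    (md : ∀ a ∈ S, 9 * eCard E X Y ≤ 10 * X.card * degA E a Y)
    (hS3 : 3 * S.card ≤ X.card + 2)
    (hbad : ((nbhd E S Y).card : ℝ) < min (2 * (S.card : ℝ)) (2 * (X.card : ℝ) / 3)) :
    ∃ X' Y', X' ⊆ X₀ ∧ Y' ⊆ Y₀ ∧ X'.Nonempty ∧ Good E X' Y' ∧
      D ^ 30 * N * (X'.card : ℝ) ^ 59 ≤ (eCard E X' Y' : ℝ) ^ 30 := by
  set k := X.card with hkdef
  set e := eCard E X Y with hedef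
  set T := nbhd E S Y with hTdef
  set s := S.card with hsdef
  set τ := T.card with hτdef
  have hkN : k ≤ N := hX₀ ▸ Finset.card_le_card hXX₀
  have hN0 : 0 < N := lt_of_lt_of_le (by omega) hkN
  -- e ≥ 1
  have he1 : 1 ≤ e := by
    by_contra h
    have he0 : e = 0 := by omega
    rw [he0] at KB
    have : (0:ℝ) < D ^ 30 * N * (k:ℝ) ^ 59 := by
      have : (0:ℝ) < (k:ℝ) := by exact_mod_cast (by omega : 0 < k)
      positivity
    simp at KB
    linarith
  -- τ < 2 s
  have hτ2s : τ < 2 * s := by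
    have h := lt_of_lt_of_le hbad (min_le_left _ _)
    exact_mod_cast h
  have hs1 : 1 ≤ s := by omega
  have heST : eCard E S Y = eCard E S T := eCard_nbhd E S Y
  -- 9 e s ≤ 10 k eCard S T
  have hmdsum : 9 * e * s ≤ 10 * k * eCard E S T := by
    rw [← heST, eCard_eq_sum_degA]
    calc 9 * e * s = ∑ _a ∈ S, 9 * e := by
          rw [Finset.sum_const, smul_eq_mul]; ring
    _ ≤ ∑ a ∈ S, 10 * k * degA E a Y := Finset.sum_le_sum md
    _ = 10 * k * ∑ a ∈ S, degA E a Y := by rw [Finset.mul_sum]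
  have heST1 : 1 ≤ eCard E S T := by
    rcases Nat.eq_zero_or_pos (eCard E S T) with h0 | h
    · exfalso
      rw [h0, Nat.mul_zero] at hmdsum
      have : 0 < 9 * e * s := Nat.mul_pos (Nat.mul_pos (by omega) (by omega)) (by omega)
      omega
    · exact h
  have hτ1 : 1 ≤ τ := by
    rcases Nat.eq_zero_or_pos τ with h0 | h
    · exfalso
      have hle := eCard_le_mul E S T
      rw [← hτdef, h0, Nat.mul_zero] at hle
      omega
    · exact h
  -- build trimmed host
  have key : ∃ (U₁ : Finset α) (V₁ : Finset β), U₁ ⊆ S ∧ V₁ ⊆ T ∧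
      U₁.card = min s τ ∧ V₁.card = min s τ ∧
      9 * e * (min s τ) ≤ 20 * k * eCard E U₁ V₁ := by
    rcases le_or_gt s τ with hst | hst
    · obtain ⟨V', hV'T, hV'card, hV'ineq⟩ := trim_right E S T s hst
      refine ⟨S, V', Finset.Subset.refl S, hV'T, ?_, ?_, ?_⟩
      · omega
      · omega
      · have hmin : min s τ = s := by omega
        rw [hmin]
        -- eCard S T * s ≤ eCard S V' * τ ≤ eCard S V' * 2 s
        have c1 : eCard E S T * s ≤ eCard E S V' * (2 * s) := by
          calc eCard E S T * s ≤ eCard E S V' * τ := hV'ineq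
          _ ≤ eCard E S V' * (2 * s) := Nat.mul_le_mul_left _ (by omega)
        have c2 : eCard E S T ≤ 2 * eCard E S V' := by
          have c1' : eCard E S T * s ≤ (2 * eCard E S V') * s := by
            calc eCard E S T * s ≤ eCard E S V' * (2 * s) := c1
            _ = (2 * eCard E S V') * s := by ring
          exact Nat.le_of_mul_le_mul_right c1' (by omega)
        calc 9 * e * s ≤ 10 * k * eCard E S T := hmdsum
        _ ≤ 10 * k * (2 * eCard E S V') := Nat.mul_le_mul_left _ c2
        _ = 20 * k * eCard E S V' := by ring
    · obtain ⟨U', hU'S, hU'card, hU'ineq⟩ := trim_left E T S τ (by omega)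
      refine ⟨U', T, hU'S, Finset.Subset.refl T, ?_, ?_, ?_⟩
      · omega
      · omega
      · have hmin : min s τ = τ := by omega
        rw [hmin]
        -- 9 e s τ ≤ 10 k eCard S T τ ≤ 10 k eCard U' T s → 9 e τ ≤ 10 k eCard U' T
        have c1 : 9 * e * s * τ ≤ 10 * k * (eCard E U' T * s) := by
          calc 9 * e * s * τ = (9 * e * s) * τ := by ring
          _ ≤ (10 * k * eCard E S T) * τ := Nat.mul_le_mul_right _ hmdsum
          _ = 10 * k * (eCard E S T * τ) := by ring
          _ ≤ 10 * k * (eCard E U' T * s) := Nat.mul_le_mul_left _ hU'ineq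
        have c2 : 9 * e * τ ≤ 10 * k * eCard E U' T := by
          have c1' : (9 * e * τ) * s ≤ (10 * k * eCard E U' T) * s := by
            calc (9 * e * τ) * s = 9 * e * s * τ := by ring
            _ ≤ 10 * k * (eCard E U' T * s) := c1
            _ = (10 * k * eCard E U' T) * s := by ring
          exact Nat.le_of_mul_le_mul_right c1' (by omega)
        calc 9 * e * τ ≤ 10 * k * eCard E U' T := c2
        _ ≤ 20 * k * eCard E U' T := Nat.mul_le_mul_right _ (by omega)
  obtain ⟨U₁, V₁, hU₁S, hV₁T, hU₁card, hV₁card, UNI⟩ := key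
  set n' := min s τ with hn'def
  set e₁ := eCard E U₁ V₁ with he₁def
  have hn'1 : 1 ≤ n' := by omega
  have hn'3 : 3 * n' ≤ k + 2 := by omega
  have hn'k : n' < k := by omega
  have hn'N : n' < N := lt_of_lt_of_le hn'k hkN
  -- real numbers
  have hkR : (2000:ℝ) ≤ (k:ℝ) := by exact_mod_cast hk2000
  have hn'R : (1:ℝ) ≤ (n':ℝ) := by exact_mod_cast hn'1
  have hn'3R : 3 * (n':ℝ) ≤ (k:ℝ) + 2 := by exact_mod_cast hn'3
  have heR : (0:ℝ) ≤ (e:ℝ) := by positivity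
  have hNR : (0:ℝ) < (N:ℝ) := by exact_mod_cast hN0
  set D' : ℝ := 9 * (e:ℝ) / (20 * (k:ℝ) * (n':ℝ)) with hD'def
  have hden : (0:ℝ) < 20 * (k:ℝ) * (n':ℝ) := by nlinarith
  have heR1 : (1:ℝ) ≤ (e:ℝ) := by exact_mod_cast he1
  have hD'pos : 0 < D' := by
    rw [hD'def]
    positivity
  have htele : D ^ 30 * N ≤ D' ^ 30 * n' := by
    have hDN0 : (0:ℝ) ≤ D ^ 30 * N := by positivity
    have hTK := telescope_key hNR hkR hn'R hn'3R heR hDN0 KB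
    have h20 : (0:ℝ) < (20 * (k:ℝ) * (n':ℝ)) ^ 30 := by positivity
    rw [hD'def, div_pow, div_mul_eq_mul_div, le_div_iff₀ h20]
    exact hTK
  have hrec2000 : (2000:ℝ) ≤ D' ^ 30 * n' := le_trans hDN htele
  have hrec_e : D' * (n' : ℝ) ^ 2 ≤ (e₁ : ℝ) := by
    have UNIR : 9 * (e:ℝ) * n' ≤ 20 * (k:ℝ) * (e₁:ℝ) := by exact_mod_cast UNI
    rw [hD'def, div_mul_eq_mul_div, div_le_iff₀ hden]
    have hn'0R : (0:ℝ) < (n':ℝ) := by linarith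
    nlinarith [mul_le_mul_of_nonneg_right UNIR (le_of_lt hn'0R)]
  obtain ⟨X', Y', hs1', hs2', hne', hgood', hbound'⟩ :=
    IH n' hn'N α β E U₁ V₁ D' hU₁card hV₁card hD'pos hrec2000 hrec_e
  refine ⟨X', Y', (hs1'.trans hU₁S).trans (hSX.trans hXX₀),
    (hs2'.trans hV₁T).trans ((nbhd_subset E S Y).trans hYY₀), hne', hgood', ?_⟩
  calc D ^ 30 * N * (X'.card : ℝ) ^ 59 ≤ D' ^ 30 * n' * (X'.card : ℝ) ^ 59 := by
        apply mul_le_mul_of_nonneg_right htele (by positivity)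
  _ ≤ (eCard E X' Y' : ℝ) ^ 30 := hbound'


lemma step (N : ℕ) (IH : ∀ M, M < N → P M) : P N := by
  intro α β _ _ E X₀ Y₀ D hX₀ hY₀ hD hDN hE₀
  have hN1 : 1 ≤ N := by
    rcases Nat.eq_zero_or_pos N with h0 | h
    · exfalso; rw [h0] at hDN; norm_num at hDN
    · exact h
  have hX₀ne : X₀.Nonempty := Finset.card_pos.mp (by omega)
  have hY₀ne : Y₀.Nonempty := Finset.card_pos.mp (by omega)
  classical
  -- maximizer over balanced nonempty pairs
  set Pairs : Finset (Finset α × Finset β) := (X₀.powerset ×ˢ Y₀.powerset).filter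
      (fun p => p.1.Nonempty ∧ p.1.card = p.2.card) with hPairsdef
  have hPairsmem : ∀ p : Finset α × Finset β, p ∈ Pairs ↔
      p.1 ⊆ X₀ ∧ p.2 ⊆ Y₀ ∧ p.1.Nonempty ∧ p.1.card = p.2.card := by
    intro p
    simp [hPairsdef, Finset.mem_filter, Finset.mem_product, Finset.mem_powerset, and_assoc]
  have hPairsne : Pairs.Nonempty := by
    refine ⟨(X₀, Y₀), ?_⟩
    rw [hPairsmem]
    exact ⟨Finset.Subset.refl _, Finset.Subset.refl _, hX₀ne, by rw [hX₀, hY₀]⟩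
  obtain ⟨p, hp, hmax⟩ := Pairs.exists_max_image
    (fun p => (eCard E p.1 p.2 : ℝ) ^ 30 / (p.1.card : ℝ) ^ 59) hPairsne
  obtain ⟨X, Y⟩ := p
  rw [hPairsmem] at hp
  obtain ⟨hXX₀, hYY₀, hXne, hcardXY⟩ := hp
  set k := X.card with hkdef
  set e := eCard E X Y with hedef
  have hk1 : 1 ≤ k := Finset.card_pos.mpr hXne
  have hkN : k ≤ N := hX₀ ▸ Finset.card_le_card hXX₀
  have MAXP : ∀ (U : Finset α) (V : Finset β), U ⊆ X₀ → V ⊆ Y₀ → U.Nonempty →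
      U.card = V.card →
      (eCard E U V : ℝ) ^ 30 * (k : ℝ) ^ 59 ≤ (e : ℝ) ^ 30 * (U.card : ℝ) ^ 59 := by
    intro U V hU hV hUne hUV
    have h := hmax (U, V) (by rw [hPairsmem]; exact ⟨hU, hV, hUne, hUV⟩)
    simp only at h
    have hU1 : (0:ℝ) < (U.card : ℝ) ^ 59 := by
      have : 0 < U.card := Finset.card_pos.mpr hUne
      have : (0:ℝ) < (U.card:ℝ) := by exact_mod_cast this
      positivity
    have hk1' : (0:ℝ) < (k : ℝ) ^ 59 := by
      have : (0:ℝ) < (k:ℝ) := by exact_mod_cast hk1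
      positivity
    rw [div_le_div_iff₀ hU1 hk1'] at h
    linarith
  -- key bound
  have KB : D ^ 30 * N * (k : ℝ) ^ 59 ≤ (e : ℝ) ^ 30 := by
    have h0 := MAXP X₀ Y₀ (Finset.Subset.refl _) (Finset.Subset.refl _) hX₀ne
      (by rw [hX₀, hY₀])
    rw [hX₀] at h0
    have hDN60 : (D * (N:ℝ) ^ 2) ^ 30 ≤ (eCard E X₀ Y₀ : ℝ) ^ 30 := by
      apply pow_le_pow_left₀ _ hE₀
      positivity
    have hNpos : (0:ℝ) < (N:ℝ) ^ 59 := by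
      have : (0:ℝ) < (N:ℝ) := by exact_mod_cast hN1
      positivity
    have hchain : (D ^ 30 * N * (k:ℝ) ^ 59) * (N:ℝ) ^ 59 ≤ ((e:ℝ) ^ 30) * (N:ℝ) ^ 59 := by
      calc (D ^ 30 * N * (k:ℝ) ^ 59) * (N:ℝ) ^ 59
          = (D * (N:ℝ) ^ 2) ^ 30 * (k:ℝ) ^ 59 := by ring
      _ ≤ (eCard E X₀ Y₀ : ℝ) ^ 30 * (k:ℝ) ^ 59 := by
          apply mul_le_mul_of_nonneg_right hDN60 (by positivity)
      _ ≤ (e:ℝ) ^ 30 * (N:ℝ) ^ 59 := h0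
    exact le_of_mul_le_mul_right hchain hNpos
  -- k ≥ 2000
  have hekk : e ≤ k * k := by
    calc e ≤ X.card * Y.card := eCard_le_mul E X Y
    _ = k * k := by rw [← hcardXY]
  have hkR0 : (0:ℝ) < (k:ℝ) := by exact_mod_cast hk1
  have hDNk : D ^ 30 * N ≤ (k:ℝ) := by
    have h2 : (e:ℝ) ^ 30 ≤ ((k:ℝ) * (k:ℝ)) ^ 30 := by
      apply pow_le_pow_left₀ (by positivity)
      exact_mod_cast hekk
    have h3 : D ^ 30 * N * (k:ℝ) ^ 59 ≤ (k:ℝ) * (k:ℝ) ^ 59 := by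
      calc D ^ 30 * N * (k:ℝ) ^ 59 ≤ (e:ℝ) ^ 30 := KB
      _ ≤ ((k:ℝ) * (k:ℝ)) ^ 30 := h2
      _ = (k:ℝ) * (k:ℝ) ^ 59 := by ring
    exact le_of_mul_le_mul_right h3 (by positivity)
  have hk2000R : (2000:ℝ) ≤ (k:ℝ) := le_trans hDN hDNk
  have hk2000 : 2000 ≤ k := by exact_mod_cast hk2000R
  have he1 : 1 ≤ e := by
    rcases Nat.eq_zero_or_pos e with h0 | h
    · exfalso
      rw [h0] at KB
      have : (0:ℝ) < D ^ 30 * N * (k:ℝ) ^ 59 := by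
        have : (0:ℝ) < (N:ℝ) := by exact_mod_cast hN1
        positivity
      norm_num at KB
      linarith
    · exact h
  have hYcard : Y.card = k := hcardXY.symm
  have hYne : Y.Nonempty := by
    rw [← Finset.card_pos, hYcard]
    omega
  -- minimum degree, X side
  have hkR1682 : (1682:ℝ) ≤ (k:ℝ) := by linarith
  have heR0 : (0:ℝ) ≤ (e:ℝ) := by positivity
  obtain ⟨b₀, hb₀Y, hb₀min⟩ := exists_min_degB E X hYne
  rw [hYcard, ← hedef] at hb₀min
  have mdX : ∀ a ∈ X, 9 * e ≤ 10 * k * degA E a Y := by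
    intro a ha
    set e' := eCard E (X.erase a) (Y.erase b₀) with he'def
    have hcard1 : (X.erase a).card = k - 1 := by
      rw [Finset.card_erase_of_mem ha]
    have hcard2 : (Y.erase b₀).card = k - 1 := by
      rw [Finset.card_erase_of_mem hb₀Y, hYcard]
    have hne' : (X.erase a).Nonempty := by
      rw [← Finset.card_pos, hcard1]; omega
    have hmx := MAXP (X.erase a) (Y.erase b₀) ((Finset.erase_subset _ _).trans hXX₀)
      ((Finset.erase_subset _ _).trans hYY₀) hne' (by rw [hcard1, hcard2])
    rw [hcard1] at hmx
    have hcast : ((k - 1 : ℕ) : ℝ) = (k:ℝ) - 1 := by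
      have : 1 ≤ k := hk1
      push_cast [this]
      ring
    rw [hcast] at hmx
    have hmd := mindeg_key heR0 (by positivity : (0:ℝ) ≤ (e':ℝ)) hkR1682 hmx
    -- e ≤ e' + degA a Y + degA flip b₀ X
    have hsplit := eCard_erase_both E X Y a b₀
    rw [← hedef, ← he'def] at hsplit
    -- k * degA flip b₀ X ≤ e
    -- combine in ℝ
    have hsplitR : (e:ℝ) ≤ (e':ℝ) + (degA E a Y : ℝ) + (degA (flipE E) b₀ X : ℝ) := by
      exact_mod_cast hsplit
    have hminR : (k:ℝ) * (degA (flipE E) b₀ X : ℝ) ≤ (e:ℝ) := by exact_mod_cast hb₀min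
    have goalR : 9 * (e:ℝ) ≤ 10 * (k:ℝ) * (degA E a Y : ℝ) := by
      have h10k : (0:ℝ) ≤ 10 * (k:ℝ) := by positivity
      have h1 := mul_le_mul_of_nonneg_left hsplitR h10k
      ring_nf at h1 hmd hminR ⊢
      linarith
    exact_mod_cast goalR
  -- minimum degree, Y side
  obtain ⟨a₀, ha₀X, ha₀min⟩ := exists_min_degB (flipE E) Y hXne
  rw [flipE_flipE, eCard_flip, ← hkdef, ← hedef] at ha₀min
  have mdY : ∀ b ∈ Y, 9 * e ≤ 10 * k * degA (flipE E) b X := by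
    intro b hb
    set e' := eCard E (X.erase a₀) (Y.erase b) with he'def
    have hcard1 : (X.erase a₀).card = k - 1 := by
      rw [Finset.card_erase_of_mem ha₀X]
    have hcard2 : (Y.erase b).card = k - 1 := by
      rw [Finset.card_erase_of_mem hb, hYcard]
    have hne' : (X.erase a₀).Nonempty := by
      rw [← Finset.card_pos, hcard1]; omega
    have hmx := MAXP (X.erase a₀) (Y.erase b) ((Finset.erase_subset _ _).trans hXX₀)
      ((Finset.erase_subset _ _).trans hYY₀) hne' (by rw [hcard1, hcard2])
    rw [hcard1] at hmx
    have hcast : ((k - 1 : ℕ) : ℝ) = (k:ℝ) - 1 := by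
      have : 1 ≤ k := hk1
      push_cast [this]
      ring
    rw [hcast] at hmx
    have hmd := mindeg_key heR0 (by positivity : (0:ℝ) ≤ (e':ℝ)) hkR1682 hmx
    have hsplit := eCard_erase_both E X Y a₀ b
    rw [← hedef, ← he'def] at hsplit
    have hsplitR : (e:ℝ) ≤ (e':ℝ) + (degA E a₀ Y : ℝ) + (degA (flipE E) b X : ℝ) := by
      exact_mod_cast hsplit
    have hminR : (k:ℝ) * (degA E a₀ Y : ℝ) ≤ (e:ℝ) := by exact_mod_cast ha₀min
    have goalR : 9 * (e:ℝ) ≤ 10 * (k:ℝ) * (degA (flipE E) b X : ℝ) := by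
      have h10k : (0:ℝ) ≤ 10 * (k:ℝ) := by positivity
      have h1 := mul_le_mul_of_nonneg_left hsplitR h10k
      ring_nf at h1 hmd hminR ⊢
      linarith
    exact_mod_cast goalR
  -- bad set case analysis
  by_cases hbadX : ∃ S ⊆ X, 3 * S.card ≤ k + 2 ∧
      ((nbhd E S Y).card : ℝ) < min (2 * (S.card : ℝ)) (2 * (k : ℝ) / 3)
  · obtain ⟨S, hSX, hS3, hbad⟩ := hbadX
    exact extract IH E X₀ Y₀ D hX₀ hD hDN X Y hXX₀ hYY₀ hk2000 KB S hSX
      (fun a ha => mdX a (hSX ha)) hS3 hbad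
  by_cases hbadY : ∃ T ⊆ Y, 3 * T.card ≤ k + 2 ∧
      ((nbhd (flipE E) T X).card : ℝ) < min (2 * (T.card : ℝ)) (2 * (k : ℝ) / 3)
  · obtain ⟨T, hTY, hT3, hbad⟩ := hbadY
    have hextr := extract IH (flipE E) Y₀ X₀ D hY₀ hD hDN Y X hYY₀ hXX₀
      (by omega) (by rw [eCard_flip, ← hedef, hYcard]; exact KB) T hTY
      (by
        intro b hb
        rw [eCard_flip, ← hedef, hYcard]
        exact mdY b (hTY hb))
      (by omega)
      (by rw [hYcard]; exact hbad)
    obtain ⟨X', Y', hs1', hs2', hne', hgood', hbound'⟩ := hextr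
    have hcard' : X'.card = Y'.card := hgood'.1
    refine ⟨Y', X', hs2', hs1', ?_, ?_, ?_⟩
    · rw [← Finset.card_pos, ← hcard']
      exact Finset.card_pos.mpr hne'
    · have := Good.symm hgood'
      rwa [flipE_flipE] at this
    · rw [← hcard', ← eCard_flip]
      exact hbound'
  · -- no bad sets : the maximizer itself is good
    push_neg at hbadX hbadY
    refine ⟨X, Y, hXX₀, hYY₀, hXne, ⟨hcardXY, mdX, mdY, ?_, ?_⟩, KB⟩
    · intro S hS h3S
      exact hbadX S hS h3S
    · intro T hT h3T
      exact hbadY T hT h3T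

lemma main_lemma : ∀ N, P N := by
  intro N
  induction N using Nat.strong_induction_on with
  | _ N IH => exact step N IH


end RMP

open RMP in
/-- Lemma 2 (robustly matchable pair): a bipartite graph with parts of size
`n` and at least `d·n²` edges contains an induced balanced pair `(A₁, B₁)`
with `|A₁| = |B₁| ≥ d^{60} n / 3`, minimum degree at least `10⁻³ d |A₁|`, and
expansion `|N(S)| ≥ min (2|S|, 2|A₁|/3)` for all `S ⊆ A₁` or `S ⊆ B₁`. -/
theorem robustly_matchable_pair :
    ∃ N : ℕ, ∀ n : ℕ, N ≤ n →
      ∀ (α β : Type) [Fintype α] [Fintype β] [DecidableEq α] [DecidableEq β],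
        Fintype.card α = n → Fintype.card β = n →
      ∀ E : α → β → Bool,
      ∀ d : ℝ, 0 < d → d ≤ 1 →
        d * (n : ℝ) ^ 2 ≤
          (((Finset.univ : Finset (α × β)).filter fun p => E p.1 p.2).card : ℝ) →
        ∃ (A₁ : Finset α) (B₁ : Finset β),
          A₁.card = B₁.card ∧
          d ^ 60 * n / 3 ≤ (A₁.card : ℝ) ∧
          (∀ a ∈ A₁,
            (10 : ℝ) ^ (-3 : ℤ) * d * A₁.card ≤ ((B₁.filter fun b => E a b).card : ℝ)) ∧
          (∀ b ∈ B₁,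
            (10 : ℝ) ^ (-3 : ℤ) * d * A₁.card ≤ ((A₁.filter fun a => E a b).card : ℝ)) ∧
          (∀ S ⊆ A₁,
            min (2 * (S.card : ℝ)) (2 * (A₁.card : ℝ) / 3) ≤
              ((B₁.filter fun b => ∃ a ∈ S, E a b).card : ℝ)) ∧
          (∀ S ⊆ B₁,
            min (2 * (S.card : ℝ)) (2 * (A₁.card : ℝ) / 3) ≤
              ((A₁.filter fun a => ∃ b ∈ S, E a b).card : ℝ)) := by
  use 2000000
  intro n hn α β _ _ _ _ hcardα hcardβ E d hd hd1 hEdges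
  have hzpow : (10 : ℝ) ^ (-3 : ℤ) = 1/1000 := by norm_num
  have hnR : (2000000:ℝ) ≤ (n:ℝ) := by exact_mod_cast hn
  have hEq : ((Finset.univ : Finset (α × β)).filter fun p => E p.1 p.2).card
      = eCard E (Finset.univ : Finset α) (Finset.univ : Finset β) := by
    rw [eCard, Finset.univ_product_univ]
  by_cases hsmall : d ^ 60 * n ≤ 3
  · -- degenerate case : a single edge suffices
    have hpos : 0 < ((Finset.univ : Finset (α × β)).filter fun p => E p.1 p.2).card := by
      rcases Nat.eq_zero_or_pos ((Finset.univ : Finset (α × β)).filter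
        fun p => E p.1 p.2).card with h0 | h
      · exfalso
        rw [h0] at hEdges
        have : (0:ℝ) < d * (n:ℝ)^2 := by
          have : (0:ℝ) < (n:ℝ) := by linarith
          positivity
        norm_num at hEdges
        linarith
      · exact h
    obtain ⟨⟨a, b⟩, hab⟩ := Finset.card_pos.mp hpos
    rw [Finset.mem_filter] at hab
    have hEab : E a b = true := hab.2
    refine ⟨{a}, {b}, by simp, ?_, ?_, ?_, ?_, ?_⟩
    · simp only [Finset.card_singleton, Nat.cast_one]
      linarith
    · intro a' ha'
      rw [Finset.mem_singleton] at ha'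
      have hfilt : ({b} : Finset β).filter (fun y => E a' y) = {b} := by
        rw [ha', Finset.filter_singleton, if_pos hEab]
      rw [hfilt]
      simp only [Finset.card_singleton, Nat.cast_one, hzpow]
      linarith
    · intro b' hb'
      rw [Finset.mem_singleton] at hb'
      have hfilt : ({a} : Finset α).filter (fun x => E x b') = {a} := by
        rw [hb', Finset.filter_singleton, if_pos hEab]
      rw [hfilt]
      simp only [Finset.card_singleton, Nat.cast_one, hzpow]
      linarith
    · intro S hS
      rcases Finset.subset_singleton_iff.mp hS with rfl | rfl
      · simp
      · have : ({b} : Finset β).filter (fun b' => ∃ a' ∈ ({a} : Finset α), E a' b') = {b} := by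
          rw [Finset.filter_singleton]
          simp [hEab]
        rw [this]
        simp only [Finset.card_singleton, Nat.cast_one]
        rw [min_le_iff]
        right
        norm_num
    · intro S hS
      rcases Finset.subset_singleton_iff.mp hS with rfl | rfl
      · simp
      · have : ({a} : Finset α).filter (fun a' => ∃ b' ∈ ({b} : Finset β), E a' b') = {a} := by
          rw [Finset.filter_singleton]
          simp [hEab]
        rw [this]
        simp only [Finset.card_singleton, Nat.cast_one]
        rw [min_le_iff]
        right
        norm_num
  · -- main case
    push_neg at hsmall
    have huniva : (Finset.univ : Finset α).card = n := by rw [Finset.card_univ, hcardα]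
    have hunivb : (Finset.univ : Finset β).card = n := by rw [Finset.card_univ, hcardβ]
    have h2000 : (2000:ℝ) ≤ d ^ 30 * n := by
      have ht0 : (0:ℝ) ≤ d ^ 30 * n := by positivity
      have ht2 : (6000000:ℝ) ≤ (d ^ 30 * n) ^ 2 := by
        have h3 : (3:ℝ) ≤ d ^ 60 * n := le_of_lt hsmall
        calc (6000000:ℝ) = 3 * 2000000 := by norm_num
        _ ≤ (d ^ 60 * n) * n := by
            apply mul_le_mul h3 hnR (by norm_num)
            positivity
        _ = (d ^ 30 * n) ^ 2 := by ring
      nlinarith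
    have hedge : d * (n:ℝ) ^ 2 ≤ (eCard E (Finset.univ : Finset α) (Finset.univ : Finset β) : ℝ) := by
      rw [← hEq]
      exact hEdges
    obtain ⟨X, Y, hXsub, hYsub, hXne, hgood, hbound⟩ :=
      main_lemma n α β E Finset.univ Finset.univ d huniva hunivb hd h2000 hedge
    obtain ⟨hcardXY, mdX, mdY, expX, expY⟩ := hgood
    set k := X.card with hkdef
    set e := eCard E X Y with hedef
    have hk1 : 1 ≤ k := Finset.card_pos.mpr hXne
    have hkR0 : (0:ℝ) < (k:ℝ) := by exact_mod_cast hk1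
    have hkn : k ≤ n := by
      rw [← huniva]
      exact Finset.card_le_card hXsub
    have hknR : (k:ℝ) ≤ (n:ℝ) := by exact_mod_cast hkn
    have hekk : e ≤ k * k := by
      calc e ≤ X.card * Y.card := eCard_le_mul E X Y
      _ = k * k := by rw [← hcardXY]
    have heR0 : (0:ℝ) ≤ (e:ℝ) := by positivity
    -- d^30 * n ≤ k
    have hdnk : d ^ 30 * n ≤ (k:ℝ) := by
      have h2 : (e:ℝ) ^ 30 ≤ ((k:ℝ) * (k:ℝ)) ^ 30 := by
        apply pow_le_pow_left₀ (by positivity)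
        exact_mod_cast hekk
      have h3 : d ^ 30 * n * (k:ℝ) ^ 59 ≤ (k:ℝ) * (k:ℝ) ^ 59 := by
        calc d ^ 30 * (n:ℝ) * (k:ℝ) ^ 59 ≤ (e:ℝ) ^ 30 := hbound
        _ ≤ ((k:ℝ) * (k:ℝ)) ^ 30 := h2
        _ = (k:ℝ) * (k:ℝ) ^ 59 := by ring
      exact le_of_mul_le_mul_right h3 (by positivity)
    -- d * k^2 ≤ e
    have hde : d * (k:ℝ) ^ 2 ≤ (e:ℝ) := by
      have h1 : (d * (k:ℝ) ^ 2) ^ 30 ≤ (e:ℝ) ^ 30 := by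
        calc (d * (k:ℝ) ^ 2) ^ 30 = d ^ 30 * (k:ℝ) * (k:ℝ) ^ 59 := by ring
        _ ≤ d ^ 30 * (n:ℝ) * (k:ℝ) ^ 59 := by
            have : d ^ 30 * (k:ℝ) ≤ d ^ 30 * (n:ℝ) := by
              apply mul_le_mul_of_nonneg_left hknR (by positivity)
            apply mul_le_mul_of_nonneg_right this (by positivity)
        _ ≤ (e:ℝ) ^ 30 := hbound
      exact (pow_le_pow_iff_left₀ (by positivity) heR0 (by norm_num)).mp h1
    refine ⟨X, Y, hcardXY, ?_, ?_, ?_, ?_, ?_⟩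
    · -- size bound
      have hd60 : d ^ 60 ≤ d ^ 30 := pow_le_pow_of_le_one (le_of_lt hd) hd1 (by norm_num)
      have : d ^ 60 * n ≤ d ^ 30 * n := by
        apply mul_le_mul_of_nonneg_right hd60 (by positivity)
      calc d ^ 60 * n / 3 ≤ d ^ 30 * n := by linarith
      _ ≤ (k:ℝ) := hdnk
    · -- min degree X side
      intro a ha
      have hmd := mdX a ha
      have hmdR : 9 * (e:ℝ) ≤ 10 * (k:ℝ) * ((Y.filter fun b => E a b).card : ℝ) := by
        exact_mod_cast hmd
      rw [hzpow]
      have hchain : 10 * (k:ℝ) * (1/1000 * d * (k:ℝ)) ≤ 10 * (k:ℝ) *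
          ((Y.filter fun b => E a b).card : ℝ) := by
        calc 10 * (k:ℝ) * (1/1000 * d * (k:ℝ)) = (d * (k:ℝ)^2) / 100 := by ring
        _ ≤ 9 * (d * (k:ℝ)^2) := by nlinarith [hde, hkR0, hd]
        _ ≤ 9 * (e:ℝ) := by linarith
        _ ≤ _ := hmdR
      exact le_of_mul_le_mul_left hchain (by positivity)
    · -- min degree Y side
      intro b hb
      have hmd := mdY b hb
      have hmdR : 9 * (e:ℝ) ≤ 10 * (k:ℝ) * ((X.filter fun a => E a b).card : ℝ) := by
        exact_mod_cast hmd
      rw [hzpow]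
      have hchain : 10 * (k:ℝ) * (1/1000 * d * (k:ℝ)) ≤ 10 * (k:ℝ) *
          ((X.filter fun a => E a b).card : ℝ) := by
        calc 10 * (k:ℝ) * (1/1000 * d * (k:ℝ)) = (d * (k:ℝ)^2) / 100 := by ring
        _ ≤ 9 * (d * (k:ℝ)^2) := by nlinarith [hde, hkR0, hd]
        _ ≤ 9 * (e:ℝ) := by linarith
        _ ≤ _ := hmdR
      exact le_of_mul_le_mul_left hchain (by positivity)
    · -- expansion X side
      intro S hS
      by_cases h3S : 3 * S.card ≤ k + 2
      · exact expX S hS h3S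
      · push_neg at h3S
        set i := (k + 2) / 3 with hidef
        have h3i : 3 * i ≤ k + 2 := by omega
        have h3i' : k ≤ 3 * i := by omega
        have hiS : i ≤ S.card := by omega
        obtain ⟨S', hS'S, hS'card⟩ := Finset.exists_subset_card_eq hiS
        have hexp := expX S' (hS'S.trans hS) (by rw [hS'card]; exact h3i)
        have h2i : 2 * (k:ℝ) / 3 ≤ 2 * (S'.card : ℝ) := by
          rw [hS'card]
          have : (k:ℝ) ≤ 3 * (i:ℝ) := by exact_mod_cast h3i'
          linarith
        have hmin : min (2 * (S'.card:ℝ)) (2 * (k:ℝ) / 3) = 2 * (k:ℝ) / 3 :=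
          min_eq_right h2i
        rw [hmin] at hexp
        calc min (2 * (S.card : ℝ)) (2 * (k:ℝ) / 3) ≤ 2 * (k:ℝ) / 3 := min_le_right _ _
        _ ≤ ((nbhd E S' Y).card : ℝ) := hexp
        _ ≤ ((nbhd E S Y).card : ℝ) := by
            exact_mod_cast Finset.card_le_card (nbhd_mono E Y hS'S)
    · -- expansion Y side
      intro S hS
      by_cases h3S : 3 * S.card ≤ k + 2
      · exact expY S hS h3S
      · push_neg at h3S
        set i := (k + 2) / 3 with hidef
        have h3i : 3 * i ≤ k + 2 := by omega
        have h3i' : k ≤ 3 * i := by omega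
        have hiS : i ≤ S.card := by omega
        obtain ⟨S', hS'S, hS'card⟩ := Finset.exists_subset_card_eq hiS
        have hexp := expY S' (hS'S.trans hS) (by rw [hS'card]; exact h3i)
        have h2i : 2 * (k:ℝ) / 3 ≤ 2 * (S'.card : ℝ) := by
          rw [hS'card]
          have : (k:ℝ) ≤ 3 * (i:ℝ) := by exact_mod_cast h3i'
          linarith
        have hmin : min (2 * (S'.card:ℝ)) (2 * (k:ℝ) / 3) = 2 * (k:ℝ) / 3 :=
          min_eq_right h2i
        rw [hmin] at hexp
        calc min (2 * (S.card : ℝ)) (2 * (k:ℝ) / 3) ≤ 2 * (k:ℝ) / 3 := min_le_right _ _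
        _ ≤ ((nbhd (flipE E) S' X).card : ℝ) := hexp
        _ ≤ ((nbhd (flipE E) S X).card : ℝ) := by
            exact_mod_cast Finset.card_le_card (nbhd_mono (flipE E) X hS'S)
end

section
/- Let G be a bipartite graph with parts A, B of equal size m, let ε = 1/10, and suppose that for all A' ⊆ A, B' ⊆ B with |A'| ≥ ε·m and |B'| ≥ ε·m we have e_G(A',B') ≥ δ·|A'|·|B'|. Then there exist A₁ ⊆ A and B₁ ⊆ B with |A₁| = |B₁| > (1−3ε)·m such that G[A₁,B₁] has minimum degree at least (δ/20)·m and satisfies: for every S ⊆ A₁ or S ⊆ B₁ with |S| < ε·m, |N(S)| ≥ 2|S|, and for every such S with |S| ≥ ε·m, |N(S)| ≥ |B₁| − ε·m. -/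
open Finset

set_option linter.unusedSectionVars false
set_option maxHeartbeats 1000000

section Robust

variable {α β : Type} [Fintype α] [Fintype β] [DecidableEq α] [DecidableEq β]

def eCnt (E : α → β → Bool) (A' : Finset α) (B' : Finset β) : ℕ :=
  ((A' ×ˢ B').filter fun p => E p.1 p.2).card

lemma eCnt_mono (E : α → β → Bool) {A' A'' : Finset α} {B' B'' : Finset β}
    (hA : A' ⊆ A'') (hB : B' ⊆ B'') : eCnt E A' B' ≤ eCnt E A'' B'' :=
  Finset.card_le_card (Finset.filter_subset_filter _ (Finset.product_subset_product hA hB))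

lemma eCnt_union_left (E : α → β → Bool) (W S : Finset α) (T : Finset β) :
    eCnt E (W ∪ S) T ≤ eCnt E W T + eCnt E S T := by
  unfold eCnt
  rw [Finset.union_product, Finset.filter_union]
  exact Finset.card_union_le _ _

lemma eCnt_union_right (E : α → β → Bool) (T : Finset α) (W S : Finset β) :
    eCnt E T (W ∪ S) ≤ eCnt E T W + eCnt E T S := by
  unfold eCnt
  rw [Finset.product_union, Finset.filter_union]
  exact Finset.card_union_le _ _

lemma eCnt_singleton_left (E : α → β → Bool) (a : α) (T : Finset β) :
    eCnt E {a} T = (T.filter fun b => E a b).card := by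
  unfold eCnt
  have h : ({a} ×ˢ T).filter (fun p => E p.1 p.2) = {a} ×ˢ (T.filter fun b => E a b) := by
    ext ⟨x, y⟩
    simp only [Finset.mem_filter, Finset.mem_product, Finset.mem_singleton]
    constructor
    · rintro ⟨⟨rfl, hy⟩, hE⟩; exact ⟨rfl, hy, hE⟩
    · rintro ⟨rfl, hy, hE⟩; exact ⟨⟨rfl, hy⟩, hE⟩
  rw [h, Finset.card_product, Finset.card_singleton, one_mul]

lemma eCnt_singleton_right (E : α → β → Bool) (T : Finset α) (b : β) :
    eCnt E T {b} = (T.filter fun a => E a b).card := by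
  unfold eCnt
  have h : (T ×ˢ {b}).filter (fun p => E p.1 p.2) = (T.filter fun a => E a b) ×ˢ {b} := by
    ext ⟨x, y⟩
    simp only [Finset.mem_filter, Finset.mem_product, Finset.mem_singleton]
    constructor
    · rintro ⟨⟨hx, rfl⟩, hE⟩; exact ⟨⟨hx, hE⟩, rfl⟩
    · rintro ⟨⟨hx, hE⟩, rfl⟩; exact ⟨⟨hx, rfl⟩, hE⟩
  rw [h, Finset.card_product, Finset.card_singleton, mul_one]

lemma eCnt_eq_zero (E : α → β → Bool) {A' : Finset α} {B' : Finset β}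
    (h : ∀ a ∈ A', ∀ b ∈ B', ¬ E a b) : eCnt E A' B' = 0 := by
  unfold eCnt
  rw [Finset.card_eq_zero, Finset.filter_eq_empty_iff]
  rintro ⟨a, b⟩ hab
  rw [Finset.mem_product] at hab
  exact h a hab.1 b hab.2

lemma contra_real {δ w t mm : ℝ} (hδ : 0 < δ) (hw : 0 < w)
    (h : δ * w * t ≤ w * (δ / 20 * mm)) (ht : mm / 20 < t) : False := by
  nlinarith [mul_pos (mul_pos hδ hw) (sub_pos.mpr ht)]

lemma main_ind (m : ℕ) (E : α → β → Bool) (δ : ℝ)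
    (hδ : 0 < δ) (hm : (100:ℝ) ≤ m)
    (hdense : ∀ (A' : Finset α) (B' : Finset β),
      (1 / 10 : ℝ) * m ≤ A'.card → (1 / 10 : ℝ) * m ≤ B'.card →
      δ * A'.card * B'.card ≤ (eCnt E A' B' : ℝ)) :
    ∀ n : ℕ, ∀ (A₁ : Finset α) (B₁ : Finset β) (WA XB : Finset α) (WB XA : Finset β),
      A₁.card ≤ n →
      A₁.card + (WA.card + WB.card) = m →
      B₁.card + (WA.card + WB.card) = m →
      (WA.card : ℝ) < 1/10 * m → (WB.card : ℝ) < 1/10 * m →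
      XA.card ≤ 2 * WA.card → XB.card ≤ 2 * WB.card →
      (eCnt E WA (B₁ \ XA) : ℝ) ≤ (WA.card : ℝ) * (δ/20 * m) →
      (eCnt E (A₁ \ XB) WB : ℝ) ≤ (WB.card : ℝ) * (δ/20 * m) →
      Disjoint A₁ WA → Disjoint B₁ WB →
      ∃ (A₂ : Finset α) (B₂ : Finset β),
        A₂.card = B₂.card ∧
        (1 - 3 * (1 / 10 : ℝ)) * m < (A₂.card : ℝ) ∧
        (∀ a ∈ A₂, δ / 20 * m ≤ ((B₂.filter fun b => E a b).card : ℝ)) ∧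
        (∀ b ∈ B₂, δ / 20 * m ≤ ((A₂.filter fun a => E a b).card : ℝ)) ∧
        (∀ S ⊆ A₂,
          ((S.card : ℝ) < (1 / 10 : ℝ) * m →
            2 * (S.card : ℝ) ≤ ((B₂.filter fun b => ∃ a ∈ S, E a b).card : ℝ)) ∧
          ((1 / 10 : ℝ) * m ≤ (S.card : ℝ) →
            (B₂.card : ℝ) - (1 / 10 : ℝ) * m ≤
              ((B₂.filter fun b => ∃ a ∈ S, E a b).card : ℝ))) ∧
        (∀ S ⊆ B₂,
          ((S.card : ℝ) < (1 / 10 : ℝ) * m →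
            2 * (S.card : ℝ) ≤ ((A₂.filter fun a => ∃ b ∈ S, E a b).card : ℝ)) ∧
          ((1 / 10 : ℝ) * m ≤ (S.card : ℝ) →
            (B₂.card : ℝ) - (1 / 10 : ℝ) * m ≤
              ((A₂.filter fun a => ∃ b ∈ S, E a b).card : ℝ))) := by
  intro n
  induction n with
  | zero =>
    intro A₁ B₁ WA XB WB XA hn h1 h2 h3 h4 h5 h6 h7 h8 h9 h10
    exfalso
    have hA0 : A₁.card = 0 := Nat.le_zero.mp hn
    have hc : (WA.card : ℝ) + (WB.card : ℝ) = m := by exact_mod_cast (by omega : WA.card + WB.card = m)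
    linarith
  | succ n ih =>
    intro A₁ B₁ WA XB WB XA hn h1 h2 h3 h4 h5 h6 h7 h8 h9 h10
    have hδ20 : (0:ℝ) ≤ δ/20 * m := by positivity
    have h1c : (A₁.card : ℝ) + ((WA.card : ℝ) + (WB.card : ℝ)) = m := by exact_mod_cast h1
    have h2c : (B₁.card : ℝ) + ((WA.card : ℝ) + (WB.card : ℝ)) = m := by exact_mod_cast h2
    have hXAc : (XA.card : ℝ) ≤ 2 * WA.card := by exact_mod_cast h5
    have hXBc : (XB.card : ℝ) ≤ 2 * WB.card := by exact_mod_cast h6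
    by_cases hdegA : ∃ a ∈ A₁, ((B₁.filter fun b => E a b).card : ℝ) < δ/20 * m
    · obtain ⟨a, ha, hdeg⟩ := hdegA
      have hA1 : 1 ≤ A₁.card := card_pos.mpr ⟨a, ha⟩
      have hB1 : 1 ≤ B₁.card := by omega
      obtain ⟨b₀, hb₀⟩ := card_pos.mp hB1
      have haW : a ∉ WA := disjoint_left.mp h9 ha
      have hcA : (A₁.erase a).card = A₁.card - 1 := card_erase_of_mem ha
      have hcB : (B₁.erase b₀).card = B₁.card - 1 := card_erase_of_mem hb₀
      have hcW : (insert a WA).card = WA.card + 1 := card_insert_of_notMem haW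
      have hTsub : (B₁.erase b₀) \ XA ⊆ B₁ \ XA :=
        sdiff_subset_sdiff (erase_subset _ _) Subset.rfl
      have hE1 : (eCnt E (insert a WA) ((B₁.erase b₀) \ XA) : ℝ)
          ≤ ((insert a WA).card : ℝ) * (δ/20 * m) := by
        have hu : eCnt E (insert a WA) ((B₁.erase b₀) \ XA)
            ≤ eCnt E {a} (B₁ \ XA) + eCnt E WA (B₁ \ XA) := by
          calc eCnt E (insert a WA) ((B₁.erase b₀) \ XA)
              ≤ eCnt E ({a} ∪ WA) (B₁ \ XA) := eCnt_mono E (by rw [insert_eq]) hTsub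
            _ ≤ _ := eCnt_union_left E _ _ _
        have hs : (eCnt E {a} (B₁ \ XA) : ℝ) ≤ δ/20*m := by
          rw [eCnt_singleton_left]
          have hle : ((B₁ \ XA).filter fun b => E a b).card ≤ (B₁.filter fun b => E a b).card :=
            card_le_card (filter_subset_filter _ sdiff_subset)
          calc (((B₁ \ XA).filter fun b => E a b).card : ℝ)
              ≤ ((B₁.filter fun b => E a b).card : ℝ) := by exact_mod_cast hle
            _ ≤ δ/20*m := hdeg.le
        calc (eCnt E (insert a WA) ((B₁.erase b₀) \ XA) : ℝ)
            ≤ (eCnt E {a} (B₁ \ XA) : ℝ) + (eCnt E WA (B₁ \ XA) : ℝ) := by exact_mod_cast hu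
          _ ≤ δ/20*m + (WA.card : ℝ) * (δ/20*m) := by linarith
          _ = ((insert a WA).card : ℝ) * (δ/20 * m) := by rw [hcW]; push_cast; ring
      have hWnew : (((insert a WA).card : ℝ)) < 1/10 * m := by
        by_contra hge
        push_neg at hge
        have hTle := Finset.card_le_card_sdiff_add_card (s := B₁.erase b₀) (t := XA)
        have hcB' : (B₁.erase b₀).card + 1 = B₁.card := by omega
        have hTc : (B₁.card : ℝ) - 1 - XA.card ≤ (((B₁.erase b₀) \ XA).card : ℝ) := by
          have e1 : ((B₁.erase b₀).card : ℝ) ≤ (((B₁.erase b₀) \ XA).card : ℝ) + XA.card := by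
            exact_mod_cast hTle
          have e2 : ((B₁.erase b₀).card : ℝ) + 1 = B₁.card := by exact_mod_cast hcB'
          linarith
        have hT1 : (1/10:ℝ) * m ≤ (((B₁.erase b₀) \ XA).card : ℝ) := by linarith
        have hT2 : (m:ℝ)/20 < (((B₁.erase b₀) \ XA).card : ℝ) := by linarith
        have hd := hdense (insert a WA) ((B₁.erase b₀) \ XA) hge hT1
        have hWpos : (0:ℝ) < ((insert a WA).card : ℝ) := by linarith
        exact contra_real hδ hWpos (le_trans hd hE1) hT2
      have h8' : (eCnt E ((A₁.erase a) \ XB) WB : ℝ) ≤ (WB.card : ℝ) * (δ/20 * m) := by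
        refine le_trans ?_ h8
        have hmono : eCnt E ((A₁.erase a) \ XB) WB ≤ eCnt E (A₁ \ XB) WB :=
          eCnt_mono E (sdiff_subset_sdiff (erase_subset _ _) Subset.rfl) Subset.rfl
        exact_mod_cast hmono
      have hd9 : Disjoint (A₁.erase a) (insert a WA) :=
        disjoint_insert_right.mpr ⟨notMem_erase _ _, disjoint_of_subset_left (erase_subset _ _) h9⟩
      have hd10 : Disjoint (B₁.erase b₀) WB := disjoint_of_subset_left (erase_subset _ _) h10
      exact ih (A₁.erase a) (B₁.erase b₀) (insert a WA) XB WB XA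
        (by omega) (by omega) (by omega) hWnew h4 (by omega) h6 hE1 h8' hd9 hd10
    by_cases hdegB : ∃ b ∈ B₁, ((A₁.filter fun a => E a b).card : ℝ) < δ/20 * m
    · obtain ⟨b, hb, hdeg⟩ := hdegB
      have hB1 : 1 ≤ B₁.card := card_pos.mpr ⟨b, hb⟩
      have hA1 : 1 ≤ A₁.card := by omega
      obtain ⟨a₀, ha₀⟩ := card_pos.mp hA1
      have hbW : b ∉ WB := disjoint_left.mp h10 hb
      have hcA : (A₁.erase a₀).card = A₁.card - 1 := card_erase_of_mem ha₀
      have hcB : (B₁.erase b).card = B₁.card - 1 := card_erase_of_mem hb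
      have hcW : (insert b WB).card = WB.card + 1 := card_insert_of_notMem hbW
      have hTsub : (A₁.erase a₀) \ XB ⊆ A₁ \ XB :=
        sdiff_subset_sdiff (erase_subset _ _) Subset.rfl
      have hE1 : (eCnt E ((A₁.erase a₀) \ XB) (insert b WB) : ℝ)
          ≤ ((insert b WB).card : ℝ) * (δ/20 * m) := by
        have hu : eCnt E ((A₁.erase a₀) \ XB) (insert b WB)
            ≤ eCnt E (A₁ \ XB) {b} + eCnt E (A₁ \ XB) WB := by
          calc eCnt E ((A₁.erase a₀) \ XB) (insert b WB)
              ≤ eCnt E (A₁ \ XB) ({b} ∪ WB) := eCnt_mono E hTsub (by rw [insert_eq])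
            _ ≤ _ := eCnt_union_right E _ _ _
        have hs : (eCnt E (A₁ \ XB) {b} : ℝ) ≤ δ/20*m := by
          rw [eCnt_singleton_right]
          have hle : ((A₁ \ XB).filter fun a => E a b).card ≤ (A₁.filter fun a => E a b).card :=
            card_le_card (filter_subset_filter _ sdiff_subset)
          calc (((A₁ \ XB).filter fun a => E a b).card : ℝ)
              ≤ ((A₁.filter fun a => E a b).card : ℝ) := by exact_mod_cast hle
            _ ≤ δ/20*m := hdeg.le
        calc (eCnt E ((A₁.erase a₀) \ XB) (insert b WB) : ℝ)
            ≤ (eCnt E (A₁ \ XB) {b} : ℝ) + (eCnt E (A₁ \ XB) WB : ℝ) := by exact_mod_cast hu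
          _ ≤ δ/20*m + (WB.card : ℝ) * (δ/20*m) := by linarith
          _ = ((insert b WB).card : ℝ) * (δ/20 * m) := by rw [hcW]; push_cast; ring
      have hWnew : (((insert b WB).card : ℝ)) < 1/10 * m := by
        by_contra hge
        push_neg at hge
        have hTle := Finset.card_le_card_sdiff_add_card (s := A₁.erase a₀) (t := XB)
        have hcA' : (A₁.erase a₀).card + 1 = A₁.card := by omega
        have hTc : (A₁.card : ℝ) - 1 - XB.card ≤ (((A₁.erase a₀) \ XB).card : ℝ) := by
          have e1 : ((A₁.erase a₀).card : ℝ) ≤ (((A₁.erase a₀) \ XB).card : ℝ) + XB.card := by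
            exact_mod_cast hTle
          have e2 : ((A₁.erase a₀).card : ℝ) + 1 = A₁.card := by exact_mod_cast hcA'
          linarith
        have hT1 : (1/10:ℝ) * m ≤ (((A₁.erase a₀) \ XB).card : ℝ) := by linarith
        have hT2 : (m:ℝ)/20 < (((A₁.erase a₀) \ XB).card : ℝ) := by linarith
        have hd := hdense ((A₁.erase a₀) \ XB) (insert b WB) hT1 hge
        have hWpos : (0:ℝ) < ((insert b WB).card : ℝ) := by linarith
        have hd' : δ * ((insert b WB).card : ℝ) * (((A₁.erase a₀) \ XB).card : ℝ)
            ≤ ((insert b WB).card : ℝ) * (δ/20 * m) := by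
          have := le_trans hd hE1
          nlinarith [this]
        exact contra_real hδ hWpos hd' hT2
      have h7' : (eCnt E WA ((B₁.erase b) \ XA) : ℝ) ≤ (WA.card : ℝ) * (δ/20 * m) := by
        refine le_trans ?_ h7
        have hmono : eCnt E WA ((B₁.erase b) \ XA) ≤ eCnt E WA (B₁ \ XA) :=
          eCnt_mono E Subset.rfl (sdiff_subset_sdiff (erase_subset _ _) Subset.rfl)
        exact_mod_cast hmono
      have hd9 : Disjoint (A₁.erase a₀) WA := disjoint_of_subset_left (erase_subset _ _) h9
      have hd10 : Disjoint (B₁.erase b) (insert b WB) :=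
        disjoint_insert_right.mpr ⟨notMem_erase _ _, disjoint_of_subset_left (erase_subset _ _) h10⟩
      exact ih (A₁.erase a₀) (B₁.erase b) WA XB (insert b WB) XA
        (by omega) (by omega) (by omega) h3 hWnew h5 (by omega) h7' hE1 hd9 hd10
    by_cases hvA : ∃ S : Finset α, S ⊆ A₁ ∧ (S.card : ℝ) < 1/10 * m ∧
        ((B₁.filter fun b => ∃ a ∈ S, E a b).card : ℝ) < 2 * S.card
    · obtain ⟨S, hSA, hSsm, hSN⟩ := hvA
      have hS1 : 1 ≤ S.card := by
        by_contra h'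
        have hS0 : S.card = 0 := by omega
        rw [hS0] at hSN
        push_cast at hSN
        have := Nat.cast_nonneg (α := ℝ) ((B₁.filter fun b => ∃ a ∈ S, E a b).card)
        linarith
      have hNR : ((B₁.filter fun b => ∃ a ∈ S, E a b).card : ℝ) ≤ 2 * S.card := hSN.le
      have hNle : (B₁.filter fun b => ∃ a ∈ S, E a b).card ≤ 2 * S.card := by
        have h' : ((B₁.filter fun b => ∃ a ∈ S, E a b).card : ℝ) ≤ ((2 * S.card : ℕ) : ℝ) := by
          push_cast; linarith
        exact_mod_cast h'
      have hSA1 : S.card ≤ A₁.card := card_le_card hSA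
      have hSle : S.card ≤ B₁.card := by omega
      obtain ⟨P, hPB, hPcard⟩ := exists_subset_card_eq hSle
      have hdisjWS : Disjoint WA S := (disjoint_of_subset_left hSA h9).symm
      have hcA : (A₁ \ S).card = A₁.card - S.card := card_sdiff_of_subset hSA
      have hcB : (B₁ \ P).card = B₁.card - S.card := by rw [card_sdiff_of_subset hPB, hPcard]
      have hcW : (WA ∪ S).card = WA.card + S.card := card_union_of_disjoint hdisjWS
      have hXN : (XA ∪ (B₁.filter fun b => ∃ a ∈ S, E a b)).card
          ≤ XA.card + (B₁.filter fun b => ∃ a ∈ S, E a b).card := card_union_le _ _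
      have hTsub : (B₁ \ P) \ (XA ∪ (B₁.filter fun b => ∃ a ∈ S, E a b)) ⊆ B₁ \ XA := by
        calc (B₁ \ P) \ (XA ∪ (B₁.filter fun b => ∃ a ∈ S, E a b))
            ⊆ B₁ \ (XA ∪ (B₁.filter fun b => ∃ a ∈ S, E a b)) :=
              sdiff_subset_sdiff sdiff_subset Subset.rfl
          _ ⊆ B₁ \ XA := sdiff_subset_sdiff Subset.rfl subset_union_left
      have hzero : eCnt E S ((B₁ \ P) \ (XA ∪ (B₁.filter fun b => ∃ a ∈ S, E a b))) = 0 := by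
        apply eCnt_eq_zero
        intro x hx y hy hEe
        have hy' := mem_sdiff.mp hy
        have hyB : y ∈ B₁ := (mem_sdiff.mp hy'.1).1
        exact hy'.2 (mem_union_right _ (mem_filter.mpr ⟨hyB, ⟨x, hx, hEe⟩⟩))
      have hE1 : (eCnt E (WA ∪ S) ((B₁ \ P) \ (XA ∪ (B₁.filter fun b => ∃ a ∈ S, E a b))) : ℝ)
          ≤ ((WA ∪ S).card : ℝ) * (δ/20 * m) := by
        have hu := eCnt_union_left E WA S ((B₁ \ P) \ (XA ∪ (B₁.filter fun b => ∃ a ∈ S, E a b)))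
        have hmono : eCnt E WA ((B₁ \ P) \ (XA ∪ (B₁.filter fun b => ∃ a ∈ S, E a b)))
            ≤ eCnt E WA (B₁ \ XA) := eCnt_mono E Subset.rfl hTsub
        have hn1 : eCnt E (WA ∪ S) ((B₁ \ P) \ (XA ∪ (B₁.filter fun b => ∃ a ∈ S, E a b)))
            ≤ eCnt E WA (B₁ \ XA) := by omega
        have hc1 : ((WA.card : ℝ)) ≤ ((WA ∪ S).card : ℝ) := by
          exact_mod_cast card_le_card (subset_union_left)
        calc (eCnt E (WA ∪ S) ((B₁ \ P) \ (XA ∪ (B₁.filter fun b => ∃ a ∈ S, E a b))) : ℝ)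
            ≤ (eCnt E WA (B₁ \ XA) : ℝ) := by exact_mod_cast hn1
          _ ≤ (WA.card : ℝ) * (δ/20*m) := h7
          _ ≤ ((WA ∪ S).card : ℝ) * (δ/20*m) := mul_le_mul_of_nonneg_right hc1 hδ20
      have hWnew : (((WA ∪ S).card : ℝ)) < 1/10 * m := by
        by_contra hge
        push_neg at hge
        have hTle := Finset.card_le_card_sdiff_add_card
          (s := (B₁ \ P)) (t := XA ∪ (B₁.filter fun b => ∃ a ∈ S, E a b))
        have e1 : ((B₁ \ P).card : ℝ) = (B₁.card : ℝ) - S.card := by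
          rw [hcB, Nat.cast_sub hSle]
        have e2 : ((B₁ \ P).card : ℝ)
            ≤ (((B₁ \ P) \ (XA ∪ (B₁.filter fun b => ∃ a ∈ S, E a b))).card : ℝ)
              + ((XA ∪ (B₁.filter fun b => ∃ a ∈ S, E a b)).card : ℝ) := by exact_mod_cast hTle
        have e3 : ((XA ∪ (B₁.filter fun b => ∃ a ∈ S, E a b)).card : ℝ)
            ≤ (XA.card : ℝ) + ((B₁.filter fun b => ∃ a ∈ S, E a b).card : ℝ) := by
          exact_mod_cast hXN
        have hT1 : (1/10:ℝ) * m
            ≤ (((B₁ \ P) \ (XA ∪ (B₁.filter fun b => ∃ a ∈ S, E a b))).card : ℝ) := by linarith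
        have hT2 : (m:ℝ)/20
            < (((B₁ \ P) \ (XA ∪ (B₁.filter fun b => ∃ a ∈ S, E a b))).card : ℝ) := by linarith
        have hd := hdense (WA ∪ S) ((B₁ \ P) \ (XA ∪ (B₁.filter fun b => ∃ a ∈ S, E a b))) hge hT1
        have hWpos : (0:ℝ) < ((WA ∪ S).card : ℝ) := by linarith
        exact contra_real hδ hWpos (le_trans hd hE1) hT2
      have h8' : (eCnt E ((A₁ \ S) \ XB) WB : ℝ) ≤ (WB.card : ℝ) * (δ/20 * m) := by
        refine le_trans ?_ h8
        have hmono : eCnt E ((A₁ \ S) \ XB) WB ≤ eCnt E (A₁ \ XB) WB :=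
          eCnt_mono E (sdiff_subset_sdiff sdiff_subset Subset.rfl) Subset.rfl
        exact_mod_cast hmono
      have hd9 : Disjoint (A₁ \ S) (WA ∪ S) :=
        disjoint_union_right.mpr ⟨disjoint_of_subset_left sdiff_subset h9, sdiff_disjoint⟩
      have hd10 : Disjoint (B₁ \ P) WB := disjoint_of_subset_left sdiff_subset h10
      exact ih (A₁ \ S) (B₁ \ P) (WA ∪ S) XB WB (XA ∪ (B₁.filter fun b => ∃ a ∈ S, E a b))
        (by omega) (by omega) (by omega) hWnew h4 (by omega) h6 hE1 h8' hd9 hd10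
    by_cases hvB : ∃ S : Finset β, S ⊆ B₁ ∧ (S.card : ℝ) < 1/10 * m ∧
        ((A₁.filter fun a => ∃ b ∈ S, E a b).card : ℝ) < 2 * S.card
    · obtain ⟨S, hSB, hSsm, hSN⟩ := hvB
      have hS1 : 1 ≤ S.card := by
        by_contra h'
        have hS0 : S.card = 0 := by omega
        rw [hS0] at hSN
        push_cast at hSN
        have := Nat.cast_nonneg (α := ℝ) ((A₁.filter fun a => ∃ b ∈ S, E a b).card)
        linarith
      have hNR : ((A₁.filter fun a => ∃ b ∈ S, E a b).card : ℝ) ≤ 2 * S.card := hSN.le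
      have hNle : (A₁.filter fun a => ∃ b ∈ S, E a b).card ≤ 2 * S.card := by
        have h' : ((A₁.filter fun a => ∃ b ∈ S, E a b).card : ℝ) ≤ ((2 * S.card : ℕ) : ℝ) := by
          push_cast; linarith
        exact_mod_cast h'
      have hSB1 : S.card ≤ B₁.card := card_le_card hSB
      have hSle : S.card ≤ A₁.card := by omega
      obtain ⟨Q, hQA, hQcard⟩ := exists_subset_card_eq hSle
      have hdisjWS : Disjoint WB S := (disjoint_of_subset_left hSB h10).symm
      have hcB : (B₁ \ S).card = B₁.card - S.card := card_sdiff_of_subset hSB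
      have hcA : (A₁ \ Q).card = A₁.card - S.card := by rw [card_sdiff_of_subset hQA, hQcard]
      have hcW : (WB ∪ S).card = WB.card + S.card := card_union_of_disjoint hdisjWS
      have hXN : (XB ∪ (A₁.filter fun a => ∃ b ∈ S, E a b)).card
          ≤ XB.card + (A₁.filter fun a => ∃ b ∈ S, E a b).card := card_union_le _ _
      have hTsub : (A₁ \ Q) \ (XB ∪ (A₁.filter fun a => ∃ b ∈ S, E a b)) ⊆ A₁ \ XB := by
        calc (A₁ \ Q) \ (XB ∪ (A₁.filter fun a => ∃ b ∈ S, E a b))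
            ⊆ A₁ \ (XB ∪ (A₁.filter fun a => ∃ b ∈ S, E a b)) :=
              sdiff_subset_sdiff sdiff_subset Subset.rfl
          _ ⊆ A₁ \ XB := sdiff_subset_sdiff Subset.rfl subset_union_left
      have hzero : eCnt E ((A₁ \ Q) \ (XB ∪ (A₁.filter fun a => ∃ b ∈ S, E a b))) S = 0 := by
        apply eCnt_eq_zero
        intro x hx y hy hEe
        have hx' := mem_sdiff.mp hx
        have hxA : x ∈ A₁ := (mem_sdiff.mp hx'.1).1
        exact hx'.2 (mem_union_right _ (mem_filter.mpr ⟨hxA, ⟨y, hy, hEe⟩⟩))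
      have hE1 : (eCnt E ((A₁ \ Q) \ (XB ∪ (A₁.filter fun a => ∃ b ∈ S, E a b))) (WB ∪ S) : ℝ)
          ≤ ((WB ∪ S).card : ℝ) * (δ/20 * m) := by
        have hu := eCnt_union_right E ((A₁ \ Q) \ (XB ∪ (A₁.filter fun a => ∃ b ∈ S, E a b))) WB S
        have hmono : eCnt E ((A₁ \ Q) \ (XB ∪ (A₁.filter fun a => ∃ b ∈ S, E a b))) WB
            ≤ eCnt E (A₁ \ XB) WB := eCnt_mono E hTsub Subset.rfl
        have hn1 : eCnt E ((A₁ \ Q) \ (XB ∪ (A₁.filter fun a => ∃ b ∈ S, E a b))) (WB ∪ S)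
            ≤ eCnt E (A₁ \ XB) WB := by omega
        have hc1 : ((WB.card : ℝ)) ≤ ((WB ∪ S).card : ℝ) := by
          exact_mod_cast card_le_card (subset_union_left)
        calc (eCnt E ((A₁ \ Q) \ (XB ∪ (A₁.filter fun a => ∃ b ∈ S, E a b))) (WB ∪ S) : ℝ)
            ≤ (eCnt E (A₁ \ XB) WB : ℝ) := by exact_mod_cast hn1
          _ ≤ (WB.card : ℝ) * (δ/20*m) := h8
          _ ≤ ((WB ∪ S).card : ℝ) * (δ/20*m) := mul_le_mul_of_nonneg_right hc1 hδ20
      have hWnew : (((WB ∪ S).card : ℝ)) < 1/10 * m := by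
        by_contra hge
        push_neg at hge
        have hTle := Finset.card_le_card_sdiff_add_card
          (s := (A₁ \ Q)) (t := XB ∪ (A₁.filter fun a => ∃ b ∈ S, E a b))
        have e1 : ((A₁ \ Q).card : ℝ) = (A₁.card : ℝ) - S.card := by
          rw [hcA, Nat.cast_sub hSle]
        have e2 : ((A₁ \ Q).card : ℝ)
            ≤ (((A₁ \ Q) \ (XB ∪ (A₁.filter fun a => ∃ b ∈ S, E a b))).card : ℝ)
              + ((XB ∪ (A₁.filter fun a => ∃ b ∈ S, E a b)).card : ℝ) := by exact_mod_cast hTle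
        have e3 : ((XB ∪ (A₁.filter fun a => ∃ b ∈ S, E a b)).card : ℝ)
            ≤ (XB.card : ℝ) + ((A₁.filter fun a => ∃ b ∈ S, E a b).card : ℝ) := by
          exact_mod_cast hXN
        have hT1 : (1/10:ℝ) * m
            ≤ (((A₁ \ Q) \ (XB ∪ (A₁.filter fun a => ∃ b ∈ S, E a b))).card : ℝ) := by linarith
        have hT2 : (m:ℝ)/20
            < (((A₁ \ Q) \ (XB ∪ (A₁.filter fun a => ∃ b ∈ S, E a b))).card : ℝ) := by linarith
        have hd := hdense ((A₁ \ Q) \ (XB ∪ (A₁.filter fun a => ∃ b ∈ S, E a b))) (WB ∪ S) hT1 hge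
        have hWpos : (0:ℝ) < ((WB ∪ S).card : ℝ) := by linarith
        have hd' : δ * ((WB ∪ S).card : ℝ)
            * (((A₁ \ Q) \ (XB ∪ (A₁.filter fun a => ∃ b ∈ S, E a b))).card : ℝ)
            ≤ ((WB ∪ S).card : ℝ) * (δ/20 * m) := by
          have hh := le_trans hd hE1
          nlinarith [hh]
        exact contra_real hδ hWpos hd' hT2
      have h7' : (eCnt E WA ((B₁ \ S) \ XA) : ℝ) ≤ (WA.card : ℝ) * (δ/20 * m) := by
        refine le_trans ?_ h7
        have hmono : eCnt E WA ((B₁ \ S) \ XA) ≤ eCnt E WA (B₁ \ XA) :=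
          eCnt_mono E Subset.rfl (sdiff_subset_sdiff sdiff_subset Subset.rfl)
        exact_mod_cast hmono
      have hd9 : Disjoint (A₁ \ Q) WA := disjoint_of_subset_left sdiff_subset h9
      have hd10 : Disjoint (B₁ \ S) (WB ∪ S) :=
        disjoint_union_right.mpr ⟨disjoint_of_subset_left sdiff_subset h10, sdiff_disjoint⟩
      exact ih (A₁ \ Q) (B₁ \ S) WA (XB ∪ (A₁.filter fun a => ∃ b ∈ S, E a b)) (WB ∪ S) XA
        (by omega) (by omega) (by omega) h3 hWnew h5 (by omega) h7' hE1 hd9 hd10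
    push_neg at hdegA hdegB hvA hvB
    refine ⟨A₁, B₁, by omega, by linarith, hdegA, hdegB, ?_, ?_⟩
    · intro S hS
      refine ⟨fun hsm => hvA S hS hsm, fun hbig => ?_⟩
      have hpart : (B₁.filter fun b => ∃ a ∈ S, E a b).card
          + (B₁.filter fun b => ¬ ∃ a ∈ S, E a b).card = B₁.card :=
        Finset.card_filter_add_card_filter_not _
      have hTsm : ((B₁.filter fun b => ¬ ∃ a ∈ S, E a b).card : ℝ) < 1/10 * m := by
        by_contra h'
        rw [not_lt] at h'
        have hd := hdense S (B₁.filter fun b => ¬ ∃ a ∈ S, E a b) hbig h'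
        have hz : eCnt E S (B₁.filter fun b => ¬ ∃ a ∈ S, E a b) = 0 := by
          apply eCnt_eq_zero
          intro x hx y hy hEe
          exact (mem_filter.mp hy).2 ⟨x, hx, hEe⟩
        rw [hz] at hd
        have hSpos : (0:ℝ) < S.card := by linarith
        have hTpos : (0:ℝ) < ((B₁.filter fun b => ¬ ∃ a ∈ S, E a b).card : ℝ) := by linarith
        have hpos := mul_pos (mul_pos hδ hSpos) hTpos
        push_cast at hd
        linarith
      have hpc : ((B₁.filter fun b => ∃ a ∈ S, E a b).card : ℝ)
          + ((B₁.filter fun b => ¬ ∃ a ∈ S, E a b).card : ℝ) = B₁.card := by exact_mod_cast hpart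
      linarith
    · intro S hS
      refine ⟨fun hsm => hvB S hS hsm, fun hbig => ?_⟩
      have hpart : (A₁.filter fun a => ∃ b ∈ S, E a b).card
          + (A₁.filter fun a => ¬ ∃ b ∈ S, E a b).card = A₁.card :=
        Finset.card_filter_add_card_filter_not _
      have hTsm : ((A₁.filter fun a => ¬ ∃ b ∈ S, E a b).card : ℝ) < 1/10 * m := by
        by_contra h'
        rw [not_lt] at h'
        have hd := hdense (A₁.filter fun a => ¬ ∃ b ∈ S, E a b) S h' hbig
        have hz : eCnt E (A₁.filter fun a => ¬ ∃ b ∈ S, E a b) S = 0 := by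
          apply eCnt_eq_zero
          intro x hx y hy hEe
          exact (mem_filter.mp hx).2 ⟨y, hy, hEe⟩
        rw [hz] at hd
        have hSpos : (0:ℝ) < S.card := by linarith
        have hTpos : (0:ℝ) < ((A₁.filter fun a => ¬ ∃ b ∈ S, E a b).card : ℝ) := by linarith
        have hpos := mul_pos (mul_pos hδ hTpos) hSpos
        push_cast at hd
        linarith
      have hpc : ((A₁.filter fun a => ∃ b ∈ S, E a b).card : ℝ)
          + ((A₁.filter fun a => ¬ ∃ b ∈ S, E a b).card : ℝ) = A₁.card := by exact_mod_cast hpart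
      have hAB : (A₁.card : ℝ) = B₁.card := by exact_mod_cast (by omega : A₁.card = B₁.card)
      linarith

end Robust



/-- From an `(ε, δ)`-dense balanced bipartite graph (with `ε = 1/10`) one can
extract a balanced pair `(A₁, B₁)` of size `> (1 − 3ε)m` whose induced graph
has minimum degree at least `(δ/20)·m`, expands small sets by a factor `2`,
and has `|N(S)| ≥ |B₁| − ε·m` for all large sets `S`. -/
theorem dense_gives_robust_pair
    (α β : Type) [Fintype α] [Fintype β] [DecidableEq α] [DecidableEq β]
    (m : ℕ) (hα : Fintype.card α = m) (hβ : Fintype.card β = m)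
    (E : α → β → Bool) (δ : ℝ) (hδ : 0 < δ) (hδm : 100 ≤ δ * m)
    (hdense : ∀ (A' : Finset α) (B' : Finset β),
      (1 / 10 : ℝ) * m ≤ A'.card → (1 / 10 : ℝ) * m ≤ B'.card →
      δ * A'.card * B'.card ≤ (((A' ×ˢ B').filter fun p => E p.1 p.2).card : ℝ)) :
    ∃ (A₁ : Finset α) (B₁ : Finset β),
      A₁.card = B₁.card ∧
      (1 - 3 * (1 / 10 : ℝ)) * m < (A₁.card : ℝ) ∧
      (∀ a ∈ A₁, δ / 20 * m ≤ ((B₁.filter fun b => E a b).card : ℝ)) ∧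
      (∀ b ∈ B₁, δ / 20 * m ≤ ((A₁.filter fun a => E a b).card : ℝ)) ∧
      (∀ S ⊆ A₁,
        ((S.card : ℝ) < (1 / 10 : ℝ) * m →
          2 * (S.card : ℝ) ≤ ((B₁.filter fun b => ∃ a ∈ S, E a b).card : ℝ)) ∧
        ((1 / 10 : ℝ) * m ≤ (S.card : ℝ) →
          (B₁.card : ℝ) - (1 / 10 : ℝ) * m ≤
            ((B₁.filter fun b => ∃ a ∈ S, E a b).card : ℝ))) ∧
      (∀ S ⊆ B₁,
        ((S.card : ℝ) < (1 / 10 : ℝ) * m →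
          2 * (S.card : ℝ) ≤ ((A₁.filter fun a => ∃ b ∈ S, E a b).card : ℝ)) ∧
        ((1 / 10 : ℝ) * m ≤ (S.card : ℝ) →
          (B₁.card : ℝ) - (1 / 10 : ℝ) * m ≤
            ((A₁.filter fun a => ∃ b ∈ S, E a b).card : ℝ))) := by
  have hm0 : (0:ℝ) < m := by
    rcases Nat.eq_zero_or_pos m with h | h
    · subst h; norm_num at hδm
    · exact_mod_cast h
  have huα : (1/10 : ℝ) * m ≤ ((Finset.univ : Finset α).card : ℝ) := by
    rw [Finset.card_univ, hα]; linarith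
  have huβ : (1/10 : ℝ) * m ≤ ((Finset.univ : Finset β).card : ℝ) := by
    rw [Finset.card_univ, hβ]; linarith
  have hd0 := hdense Finset.univ Finset.univ huα huβ
  have hle : ((((Finset.univ : Finset α) ×ˢ (Finset.univ : Finset β)).filter
      fun p => E p.1 p.2).card : ℝ) ≤ (m:ℝ) * m := by
    have h1 := Finset.card_filter_le ((Finset.univ : Finset α) ×ˢ (Finset.univ : Finset β))
      (fun p => E p.1 p.2)
    have h2 : ((Finset.univ : Finset α) ×ˢ (Finset.univ : Finset β)).card = m * m := by
      rw [Finset.card_product, Finset.card_univ, Finset.card_univ, hα, hβ]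
    calc ((((Finset.univ : Finset α) ×ˢ (Finset.univ : Finset β)).filter
          fun p => E p.1 p.2).card : ℝ)
        ≤ (((Finset.univ : Finset α) ×ˢ (Finset.univ : Finset β)).card : ℝ) := by
          exact_mod_cast h1
      _ = (m:ℝ) * m := by exact_mod_cast h2
  have hδ1 : δ ≤ 1 := by
    rw [Finset.card_univ, Finset.card_univ, hα, hβ] at hd0
    have key : δ * (m:ℝ) * m ≤ (m:ℝ) * m := le_trans hd0 hle
    nlinarith [mul_pos hm0 hm0]
  have hm : (100:ℝ) ≤ m := by nlinarith [mul_nonneg (sub_nonneg.mpr hδ1) (le_of_lt hm0)]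
  have h1 : (Finset.univ : Finset α).card + ((∅ : Finset α).card + (∅ : Finset β).card) = m := by
    simp [hα]
  have h2 : (Finset.univ : Finset β).card + ((∅ : Finset α).card + (∅ : Finset β).card) = m := by
    simp [hβ]
  have hE1 : (eCnt E (∅ : Finset α) ((Finset.univ : Finset β) \ ∅) : ℝ)
      ≤ (((∅ : Finset α).card : ℝ)) * (δ/20 * m) := by
    simp [eCnt]
  have hE2 : (eCnt E ((Finset.univ : Finset α) \ ∅) (∅ : Finset β) : ℝ)
      ≤ (((∅ : Finset β).card : ℝ)) * (δ/20 * m) := by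
    simp [eCnt]
  exact main_ind m E δ hδ hm (fun A' B' hA hB => hdense A' B' hA hB)
    m Finset.univ Finset.univ ∅ ∅ ∅ ∅
    (by rw [Finset.card_univ, hα]) h1 h2
    (by simp only [Finset.card_empty, Nat.cast_zero]; linarith)
    (by simp only [Finset.card_empty, Nat.cast_zero]; linarith) (by simp) (by simp)
    hE1 hE2 (Finset.disjoint_empty_right _) (Finset.disjoint_empty_right _)
end

section
/- If a properly edge-coloured bipartite graph G with parts A, B contains a matching M together with, for each edge uv ∈ M in some set R, an 'augmenting' replacement structure (delete one edge of M, add two edges to vertices outside V(M) using new colours, then iteratively repair colour conflicts, each repair having more available choices than the number of forbidden ones), then G contains a rainbow matching strictly larger than M. In particular: if M is a rainbow matching in G, ab ∈ M, and there exist a₀ ∉ V(M), b₀ ∉ V(M) with edges a₀b, ab₀ ∈ G whose colours are not used by M, then (M \ {ab}) ∪ {a₀b, ab₀} is a rainbow matching of size |M| + 1. -/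
/-- Elementary augmentation step: if `M` is a rainbow matching in a properly
edge-coloured bipartite graph, `ab ∈ M`, and `a₀, b₀` are vertices uncovered
by `M` such that `a₀b` and `ab₀` are edges whose colours are distinct from
each other and unused by `M`, then `(M \ {ab}) ∪ {a₀b, ab₀}` is a rainbow
matching of size `|M| + 1`. -/
theorem rainbow_matching_augment
    (α β : Type) [DecidableEq α] [DecidableEq β]
    (E : α → β → Bool) (c : α → β → ℕ)
    (hproperA : ∀ a b b', E a b → E a b' → b ≠ b' → c a b ≠ c a b')
    (hproperB : ∀ a a' b, E a b → E a' b → a ≠ a' → c a b ≠ c a' b)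
    (M : Finset (α × β))
    (hME : ∀ p ∈ M, E p.1 p.2 = true)
    (hM1 : Set.InjOn (Prod.fst : α × β → α) ↑M)
    (hM2 : Set.InjOn (Prod.snd : α × β → β) ↑M)
    (hMrb : Set.InjOn (fun p : α × β => c p.1 p.2) (↑M : Set (α × β)))
    (a : α) (b : β) (hab : (a, b) ∈ M)
    (a₀ : α) (b₀ : β)
    (ha₀ : ∀ p ∈ M, p.1 ≠ a₀) (hb₀ : ∀ p ∈ M, p.2 ≠ b₀)
    (he1 : E a₀ b = true) (he2 : E a b₀ = true)
    (hc1 : ∀ p ∈ M, c p.1 p.2 ≠ c a₀ b)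
    (hc2 : ∀ p ∈ M, c p.1 p.2 ≠ c a b₀)
    (hc12 : c a₀ b ≠ c a b₀) :
    (insert (a₀, b) (insert (a, b₀) (M.erase (a, b)))).card = M.card + 1 ∧
    (∀ p ∈ insert (a₀, b) (insert (a, b₀) (M.erase (a, b))), E p.1 p.2 = true) ∧
    Set.InjOn (Prod.fst : α × β → α)
      ↑(insert (a₀, b) (insert (a, b₀) (M.erase (a, b)))) ∧
    Set.InjOn (Prod.snd : α × β → β)
      ↑(insert (a₀, b) (insert (a, b₀) (M.erase (a, b)))) ∧
    Set.InjOn (fun p : α × β => c p.1 p.2)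
      (↑(insert (a₀, b) (insert (a, b₀) (M.erase (a, b)))) : Set (α × β)) := by
  have haa₀ : a ≠ a₀ := ha₀ (a, b) hab
  have hbb₀ : b ≠ b₀ := hb₀ (a, b) hab
  -- membership in erase implies in M and ≠ (a,b)
  have hEr : ∀ p ∈ M.erase (a, b), p ∈ M ∧ p ≠ (a, b) := by
    intro p hp
    exact ⟨Finset.mem_of_mem_erase hp, Finset.ne_of_mem_erase hp⟩
  have hfst : ∀ p ∈ M.erase (a, b), p.1 ≠ a := by
    intro p hp h
    obtain ⟨hpM, hpne⟩ := hEr p hp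
    exact hpne (hM1 hpM hab h)
  have hsnd : ∀ p ∈ M.erase (a, b), p.2 ≠ b := by
    intro p hp h
    obtain ⟨hpM, hpne⟩ := hEr p hp
    exact hpne (hM2 hpM hab h)
  have h1 : (a, b₀) ∉ M.erase (a, b) := by
    intro h
    exact hb₀ _ (Finset.mem_of_mem_erase h) rfl
  have h2 : (a₀, b) ∉ insert (a, b₀) (M.erase (a, b)) := by
    intro h
    rcases Finset.mem_insert.mp h with h | h
    · exact haa₀ (congrArg Prod.fst h).symm
    · exact ha₀ _ (Finset.mem_of_mem_erase h) rfl
  refine ⟨?_, ?_, ?_, ?_, ?_⟩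
  · rw [Finset.card_insert_of_notMem h2, Finset.card_insert_of_notMem h1,
      Finset.card_erase_of_mem hab]
    have : 1 ≤ M.card := Finset.card_pos.mpr ⟨_, hab⟩
    omega
  · intro p hp
    rcases Finset.mem_insert.mp hp with h | h
    · rw [h]; exact he1
    rcases Finset.mem_insert.mp h with h | h
    · rw [h]; exact he2
    · exact hME p (Finset.mem_of_mem_erase h)
  · intro p hp q hq h
    simp only [Finset.coe_insert, Set.mem_insert_iff, Finset.mem_coe] at hp hq
    rcases hp with rfl | rfl | hp <;> rcases hq with rfl | rfl | hq
    · rfl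
    · exact absurd h.symm haa₀
    · exact absurd h.symm (ha₀ _ (Finset.mem_of_mem_erase hq))
    · exact absurd h haa₀
    · rfl
    · exact absurd h.symm (hfst _ hq)
    · exact absurd h (ha₀ _ (Finset.mem_of_mem_erase hp))
    · exact absurd h (hfst _ hp)
    · exact hM1 (Finset.mem_coe.mpr (Finset.mem_of_mem_erase hp))
        (Finset.mem_coe.mpr (Finset.mem_of_mem_erase hq)) h
  · intro p hp q hq h
    simp only [Finset.coe_insert, Set.mem_insert_iff, Finset.mem_coe] at hp hq
    rcases hp with rfl | rfl | hp <;> rcases hq with rfl | rfl | hq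
    · rfl
    · exact absurd h hbb₀
    · exact absurd h.symm (hsnd _ hq)
    · exact absurd h.symm hbb₀
    · rfl
    · exact absurd h.symm (hb₀ _ (Finset.mem_of_mem_erase hq))
    · exact absurd h (hsnd _ hp)
    · exact absurd h (hb₀ _ (Finset.mem_of_mem_erase hp))
    · exact hM2 (Finset.mem_coe.mpr (Finset.mem_of_mem_erase hp))
        (Finset.mem_coe.mpr (Finset.mem_of_mem_erase hq)) h
  · intro p hp q hq h
    simp only [Finset.coe_insert, Set.mem_insert_iff, Finset.mem_coe] at hp hq
    rcases hp with rfl | rfl | hp <;> rcases hq with rfl | rfl | hq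
    · rfl
    · exact absurd h hc12
    · exact absurd h.symm (hc1 _ (Finset.mem_of_mem_erase hq))
    · exact absurd h.symm hc12
    · rfl
    · exact absurd h.symm (hc2 _ (Finset.mem_of_mem_erase hq))
    · exact absurd h (hc1 _ (Finset.mem_of_mem_erase hp))
    · exact absurd h (hc2 _ (Finset.mem_of_mem_erase hp))
    · exact hMrb (Finset.mem_coe.mpr (Finset.mem_of_mem_erase hp))
        (Finset.mem_coe.mpr (Finset.mem_of_mem_erase hq)) h
end
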